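/- arXiv:1410.3954 — 3 statements merged into one kernel-verified Lean document; each statement's English description precedes it below -/
import Mathlib

section
/- In PG(2,q) with q an odd prime power, there are exactly q^2(q-1) proper conics passing through the two points [1,0,0] and [0,1,0]. -/
open Matrix

/-- The zero set in `PG(2,q)` of the quadratic form associated to a symmetric matrix `M`. -/
def conicSet {F : Type} [Field F] (M : Matrix (Fin 3) (Fin 3) F) :
    Set (Projectivization F (Fin 3 → F)) :=
  {p | p.rep ⬝ᵥ M.mulVec p.rep = 0}

/-- A proper conic: the zero set of a quadratic form with invertible symmetric matrix. -/
def IsProperConic {F : Type} [Field F] (S : Set (Projectivization F (Fin 3 → F))) : Prop :=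
  ∃ M : Matrix (Fin 3) (Fin 3) F, M.IsSymm ∧ IsUnit M.det ∧ S = conicSet M

section Aux

variable {F : Type} [Field F]

lemma mem_conicSet_mk (M : Matrix (Fin 3) (Fin 3) F) (v : Fin 3 → F) (hv : v ≠ 0) :
    Projectivization.mk F v hv ∈ conicSet M ↔ v ⬝ᵥ M.mulVec v = 0 := by
  obtain ⟨a, ha⟩ := Projectivization.exists_smul_eq_mk_rep F v hv
  have hrep : (Projectivization.mk F v hv).rep = (a : F) • v := by
    rw [← ha]; rfl
  simp only [conicSet, Set.mem_setOf_eq, hrep, Matrix.mulVec_smul, smul_dotProduct,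
    dotProduct_smul, smul_eq_mul]
  constructor
  · intro h
    rcases mul_eq_zero.mp h with h | h
    · exact absurd h a.ne_zero
    · rcases mul_eq_zero.mp h with h | h
      · exact absurd h a.ne_zero
      · exact h
  · intro h; rw [h]; ring

lemma conicSet_smul (t : F) (ht : t ≠ 0) (M : Matrix (Fin 3) (Fin 3) F) :
    conicSet (t • M) = conicSet M := by
  ext p
  simp only [conicSet, Set.mem_setOf_eq, Matrix.smul_mulVec, dotProduct_smul,
    smul_eq_mul, mul_eq_zero]
  constructor
  · rintro (h | h)
    · exact absurd h ht
    · exact h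
  · exact fun h => Or.inr h

/-- The general symmetric matrix with zero diagonal in first two slots. -/
def cM (d e f c : F) : Matrix (Fin 3) (Fin 3) F := !![0,d,e;d,0,f;e,f,c]

lemma quad_eval (d e f c : F) (v : Fin 3 → F) :
    v ⬝ᵥ (cM d e f c).mulVec v
      = 2*d*(v 0)*(v 1) + 2*e*(v 0)*(v 2) + 2*f*(v 1)*(v 2) + c*(v 2)*(v 2) := by
  simp [cM, Matrix.mulVec, dotProduct, Fin.sum_univ_three]
  ring

lemma cM_isSymm (d e f c : F) : (cM d e f c).IsSymm := by
  ext i j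
  fin_cases i <;> fin_cases j <;> simp [cM, Matrix.transpose_apply]

lemma cM_det (d e f c : F) : (cM d e f c).det = 2*d*e*f - c*d^2 := by
  simp [cM, Matrix.det_fin_three]
  ring

lemma vec_xy1_ne_zero (x y : F) : (![x, y, 1] : Fin 3 → F) ≠ 0 := by
  intro h0
  simpa using congrFun h0 2

lemma exists_two_ne [Fintype F] (h3 : 3 ≤ Fintype.card F) (a : F) :
    ∃ x y : F, x ≠ y ∧ x ≠ a ∧ y ≠ a := by
  classical
  have hlt : 1 < (Finset.univ.erase a).card := by
    rw [Finset.card_erase_of_mem (Finset.mem_univ a), Finset.card_univ]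
    omega
  obtain ⟨x, hx, y, hy, hxy⟩ := Finset.one_lt_card.mp hlt
  exact ⟨x, y, hxy, Finset.ne_of_mem_erase hx, Finset.ne_of_mem_erase hy⟩

lemma inj_params [Fintype F] (h2 : (2 : F) ≠ 0) (h3 : 3 ≤ Fintype.card F)
    {e f c e' f' c' : F} (hc : c ≠ 2*e*f) (hc' : c' ≠ 2*e'*f')
    (h : conicSet (cM 1 e f c) = conicSet (cM 1 e' f' c')) :
    e = e' ∧ f = f' ∧ c = c' := by
  have key : ∀ x y : F,
      (2*x*y + 2*e*x + 2*f*y + c = 0 ↔ 2*x*y + 2*e'*x + 2*f'*y + c' = 0) := by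
    intro x y
    have hv := vec_xy1_ne_zero x y
    have hmem := Set.ext_iff.mp h (Projectivization.mk F ![x, y, 1] hv)
    rw [mem_conicSet_mk, mem_conicSet_mk, quad_eval, quad_eval] at hmem
    have e1 : (![x,y,1] : Fin 3 → F) 0 = x := rfl
    have e2 : (![x,y,1] : Fin 3 → F) 1 = y := rfl
    have e3 : (![x,y,1] : Fin 3 → F) 2 = 1 := rfl
    rw [e1, e2, e3] at hmem
    constructor
    · intro hh
      have := hmem.mp (by linear_combination hh)
      linear_combination this
    · intro hh
      have := hmem.mpr (by linear_combination hh)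
      linear_combination this
  have hff : f = f' := by
    by_contra hf
    have hs : 2*(-f) + 2*f' ≠ 0 := by
      intro h0
      apply hf
      have h1 : 2*(f' - f) = 0 := by linear_combination h0
      rcases mul_eq_zero.mp h1 with hh | hh
      · exact absurd hh h2
      · exact (sub_eq_zero.mp hh).symm
    set y : F := -(2*e'*(-f) + c')/(2*(-f)+2*f') with hy
    have hys : y * (2*(-f)+2*f') = -(2*e'*(-f) + c') := div_mul_cancel₀ _ hs
    have h1 : 2*(-f)*y + 2*e'*(-f) + 2*f'*y + c' = 0 := by
      linear_combination hys
    have h0 := (key (-f) y).mpr h1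
    exact hc (by linear_combination h0)
  subst hff
  have lin : ∀ x : F, x ≠ -f → 2*e*x + c = 2*e'*x + c' := by
    intro x hx
    have hs : 2*x + 2*f ≠ 0 := by
      intro h0
      apply hx
      have h1 : 2*(x + f) = 0 := by linear_combination h0
      rcases mul_eq_zero.mp h1 with hh | hh
      · exact absurd hh h2
      · exact eq_neg_of_add_eq_zero_left hh
    set y : F := -(2*e*x + c)/(2*x+2*f) with hy
    have hys : y * (2*x+2*f) = -(2*e*x + c) := div_mul_cancel₀ _ hs
    have h1 : 2*x*y + 2*e*x + 2*f*y + c = 0 := by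
      linear_combination hys
    have h0 := (key x y).mp h1
    linear_combination h1 - h0
  obtain ⟨x₁, x₂, hx12, hx1, hx2⟩ := exists_two_ne h3 (-f)
  have l1 := lin x₁ hx1
  have l2 := lin x₂ hx2
  have he : e = e' := by
    have hz : 2*(e - e')*(x₁ - x₂) = 0 := by linear_combination l1 - l2
    rcases mul_eq_zero.mp hz with hh | hh
    · rcases mul_eq_zero.mp hh with hh | hh
      · exact absurd hh h2
      · exact sub_eq_zero.mp hh
    · exact absurd (sub_eq_zero.mp hh) hx12
  refine ⟨he, rfl, ?_⟩
  linear_combination l1 - 2*x₁*he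

lemma ncard_param (F : Type) [Field F] [Fintype F] :
    ({p : F × F × F | p.2.2 ≠ 2 * p.1 * p.2.1}).ncard
      = Fintype.card F ^ 2 * (Fintype.card F - 1) := by
  classical
  have hequiv : ↥({p : F × F × F | p.2.2 ≠ 2 * p.1 * p.2.1}) ≃ F × F × Fˣ :=
    { toFun := fun p => (p.1.1, p.1.2.1,
        Units.mk0 (p.1.2.2 - 2 * p.1.1 * p.1.2.1) (sub_ne_zero.mpr p.2))
      invFun := fun q => ⟨(q.1, q.2.1, (q.2.2 : F) + 2 * q.1 * q.2.1), by
        simp only [Set.mem_setOf_eq]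
        intro hh
        exact q.2.2.ne_zero (by linear_combination hh)⟩
      left_inv := fun p => by
        ext <;> simp
      right_inv := fun q => by
        refine Prod.ext rfl (Prod.ext rfl ?_)
        ext
        simp }
  rw [← Nat.card_coe_set_eq, Nat.card_congr hequiv]
  simp [Nat.card_eq_fintype_card, Fintype.card_prod, Fintype.card_units]
  ring

end Aux

/-- In `PG(2,q)`, `q` an odd prime power, there are exactly `q^2 * (q-1)` proper conics
through the two points `[1,0,0]` and `[0,1,0]`. -/
theorem num_proper_conics_through_two_points
    (F : Type) [Field F] [Fintype F] (hq : Odd (Fintype.card F)) :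
    {S : Set (Projectivization F (Fin 3 → F)) | IsProperConic S ∧
        Projectivization.mk F (![1, 0, 0] : Fin 3 → F)
          (by intro h; simpa using congrFun h 0) ∈ S ∧
        Projectivization.mk F (![0, 1, 0] : Fin 3 → F)
          (by intro h; simpa using congrFun h 1) ∈ S}.ncard
      = Fintype.card F ^ 2 * (Fintype.card F - 1) := by
  classical
  classical
  have h2 : (2 : F) ≠ 0 := by
    intro h0
    have hchar : ringChar F = 2 := by
      have hcast : ((2 : ℕ) : F) = 0 := by exact_mod_cast h0
      have hdvd : ringChar F ∣ 2 := (ringChar.spec F 2).mp hcast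
      rcases (Nat.dvd_prime Nat.prime_two).mp hdvd with hh | hh
      · exfalso
        have h1 := (ringChar.spec F 1).mpr (hh ▸ dvd_refl _)
        simp at h1
      · exact hh
    have heven := FiniteField.even_card_of_char_two hchar
    rw [Nat.odd_iff] at hq
    omega
  have h3 : 3 ≤ Fintype.card F := by
    have h1 : 1 < Fintype.card F := Fintype.one_lt_card
    rw [Nat.odd_iff] at hq
    omega
  set φ : F × F × F → Set (Projectivization F (Fin 3 → F)) :=
    fun p => conicSet (cM 1 p.1 p.2.1 p.2.2) with hφ
  have himg : {S : Set (Projectivization F (Fin 3 → F)) | IsProperConic S ∧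
        Projectivization.mk F (![1, 0, 0] : Fin 3 → F)
          (by intro h; simpa using congrFun h 0) ∈ S ∧
        Projectivization.mk F (![0, 1, 0] : Fin 3 → F)
          (by intro h; simpa using congrFun h 1) ∈ S}
      = φ '' {p : F × F × F | p.2.2 ≠ 2 * p.1 * p.2.1} := by
    ext S
    simp only [Set.mem_setOf_eq, Set.mem_image]
    constructor
    · rintro ⟨⟨M, hsym, hdet, rfl⟩, hp1, hp2⟩
      rw [mem_conicSet_mk] at hp1 hp2
      have h00 : M 0 0 = 0 := by
        simpa [Matrix.mulVec, dotProduct, Fin.sum_univ_three] using hp1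
      have h11 : M 1 1 = 0 := by
        simpa [Matrix.mulVec, dotProduct, Fin.sum_univ_three] using hp2
      set d := M 0 1 with hd'
      set e := M 0 2 with he'
      set f := M 1 2 with hf'
      set c := M 2 2 with hc'
      have hsymm : ∀ i j, M j i = M i j := fun i j => hsym.apply i j
      have hM : M = cM d e f c := by
        ext i j
        fin_cases i <;> fin_cases j <;>
          simp [cM, h00, h11, hd', he', hf', hc', hsymm 0 1, hsymm 0 2, hsymm 1 2]
      rw [hM, cM_det, isUnit_iff_ne_zero] at hdet
      have hd : d ≠ 0 := by
        intro h0
        apply hdet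
        rw [h0]; ring
      refine ⟨(e * d⁻¹, f * d⁻¹, c * d⁻¹), ?_, ?_⟩
      · simp only [Set.mem_setOf_eq]
        intro h0
        apply hdet
        have hA : c * d⁻¹ * d ^ 2 = c * d := by
          field_simp
        have hB : 2 * (e * d⁻¹) * (f * d⁻¹) * d ^ 2 = 2 * e * f := by
          field_simp
        have hcd : c * d = 2 * e * f := by rw [← hA, ← hB, h0]
        linear_combination (-d) * hcd
      · show conicSet (cM 1 (e * d⁻¹) (f * d⁻¹) (c * d⁻¹)) = conicSet M
        have hMM : cM 1 (e * d⁻¹) (f * d⁻¹) (c * d⁻¹) = d⁻¹ • cM d e f c := by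
          ext i j
          fin_cases i <;> fin_cases j <;>
            simp [cM, Matrix.smul_apply, smul_eq_mul] <;>
            field_simp
        rw [hMM, conicSet_smul d⁻¹ (inv_ne_zero hd), ← hM]
    · rintro ⟨⟨e, f, c⟩, hPmem, rfl⟩
      simp only [Set.mem_setOf_eq] at hPmem
      refine ⟨⟨cM 1 e f c, cM_isSymm _ _ _ _, ?_, rfl⟩, ?_, ?_⟩
      · rw [cM_det, isUnit_iff_ne_zero]
        intro h0
        exact hPmem (by linear_combination -h0)
      · rw [mem_conicSet_mk, quad_eval]
        have hz : (![1, 0, 0] : Fin 3 → F) 2 = 0 := rfl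
        norm_num [hz]
      · rw [mem_conicSet_mk, quad_eval]
        have hz : (![0, 1, 0] : Fin 3 → F) 2 = 0 := rfl
        norm_num [hz]
  have hinj : Set.InjOn φ {p : F × F × F | p.2.2 ≠ 2 * p.1 * p.2.1} := by
    rintro ⟨e, f, c⟩ hp ⟨e', f', c'⟩ hq' hEq
    simp only [Set.mem_setOf_eq] at hp hq'
    obtain ⟨hb1, hb2, hb3⟩ := inj_params h2 h3 hp hq' hEq
    simp only [Prod.mk.injEq]
    exact ⟨hb1, hb2, hb3⟩
  rw [himg, Set.ncard_image_of_injOn hinj, ncard_param]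
end

section
/- In PG(2,q) with q an odd prime power, for any fixed proper conic C, there are exactly binom(q+1,4)·(q-3) proper conics intersecting C in exactly four points. -/
open Matrix

namespace ConicAux

variable {F : Type} [Field F]

abbrev Pt (F : Type) [Field F] := Projectivization F (Fin 3 → F)

lemma smul_quad (a : F) (M : Matrix (Fin 3) (Fin 3) F) (v : Fin 3 → F) :
    (a • v) ⬝ᵥ M.mulVec (a • v) = a^2 * (v ⬝ᵥ M.mulVec v) := by
  rw [Matrix.mulVec_smul, smul_dotProduct, dotProduct_smul]
  ring_nf

lemma mem_conicSet_mk {M : Matrix (Fin 3) (Fin 3) F} {v : Fin 3 → F} (hv : v ≠ 0) :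
    Projectivization.mk F v hv ∈ conicSet M ↔ v ⬝ᵥ M.mulVec v = 0 := by
  obtain ⟨a, ha⟩ := Projectivization.exists_smul_eq_mk_rep F v hv
  have : (Projectivization.mk F v hv).rep = (a : F) • v := by rw [← ha]; rfl
  simp only [conicSet, Set.mem_setOf_eq, this, smul_quad]
  constructor
  · intro h
    rcases mul_eq_zero.1 h with h | h
    · exact absurd (pow_eq_zero_iff (by norm_num)|>.1 h) a.ne_zero
    · exact h
  · intro h; rw [h, mul_zero]

lemma conicSet_smul {c : F} (hc : c ≠ 0) (M : Matrix (Fin 3) (Fin 3) F) :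
    conicSet (c • M) = conicSet M := by
  ext p
  simp only [conicSet, Set.mem_setOf_eq, Matrix.smul_mulVec, dotProduct_smul,
    smul_eq_mul, mul_eq_zero]
  tauto

/-- Projective transformation attached to an invertible matrix. -/
noncomputable def pmap (P : Matrix (Fin 3) (Fin 3) F) (hP : IsUnit P.det) : Pt F → Pt F :=
  fun p => Projectivization.mk F (P.mulVec p.rep)
    (fun h => p.rep_nonzero ((Matrix.mulVec_injective_iff_isUnit.2
      ((Matrix.isUnit_iff_isUnit_det P).2 hP)).eq_iff.1
      (h.trans (Matrix.mulVec_zero P).symm)))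

lemma pmap_mk {P : Matrix (Fin 3) (Fin 3) F} (hP : IsUnit P.det) {v : Fin 3 → F} (hv : v ≠ 0)
    (hPv : P.mulVec v ≠ 0) :
    pmap P hP (Projectivization.mk F v hv) = Projectivization.mk F (P.mulVec v) hPv := by
  obtain ⟨a, ha⟩ := Projectivization.exists_smul_eq_mk_rep F v hv
  show Projectivization.mk F (P.mulVec (Projectivization.mk F v hv).rep) _ = _
  rw [Projectivization.mk_eq_mk_iff]
  refine ⟨a, ?_⟩
  have : (Projectivization.mk F v hv).rep = (a : F) • v := by rw [← ha]; rfl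
  rw [this, Matrix.mulVec_smul]
  rfl

lemma mulVec_ne_zero {P : Matrix (Fin 3) (Fin 3) F} (hP : IsUnit P.det) {v : Fin 3 → F}
    (hv : v ≠ 0) : P.mulVec v ≠ 0 :=
  fun h => hv ((Matrix.mulVec_injective_iff_isUnit.2
      ((Matrix.isUnit_iff_isUnit_det P).2 hP)).eq_iff.1
      (h.trans (Matrix.mulVec_zero P).symm))

lemma pmap_mk' {P : Matrix (Fin 3) (Fin 3) F} (hP : IsUnit P.det) {v : Fin 3 → F} (hv : v ≠ 0) :
    pmap P hP (Projectivization.mk F v hv)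
      = Projectivization.mk F (P.mulVec v) (mulVec_ne_zero hP hv) :=
  pmap_mk hP hv _

lemma pmap_pmap {P Q : Matrix (Fin 3) (Fin 3) F} (hP : IsUnit P.det) (hQ : IsUnit Q.det)
    (p : Pt F) : pmap P hP (pmap Q hQ p) = pmap (P * Q) (by rw [Matrix.det_mul]; exact hP.mul hQ) p := by
  induction p using Projectivization.ind with
  | h v hv =>
    rw [pmap_mk' hQ hv, pmap_mk' hP (mulVec_ne_zero hQ hv), pmap_mk' _ hv]
    congr 1
    rw [Matrix.mulVec_mulVec]

lemma pmap_id (p : Pt F) : pmap (1 : Matrix (Fin 3) (Fin 3) F) (by simp) p = p := by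
  induction p using Projectivization.ind with
  | h v hv => rw [pmap_mk' _ hv]; congr 1 <;> rw [Matrix.one_mulVec]

lemma pmap_bijective {P : Matrix (Fin 3) (Fin 3) F} (hP : IsUnit P.det) :
    Function.Bijective (pmap P hP) := by
  have hP' : IsUnit P⁻¹.det := by
    exact Matrix.isUnit_nonsing_inv_det P hP
  refine Function.bijective_iff_has_inverse.2 ⟨pmap P⁻¹ hP', fun p => ?_, fun p => ?_⟩
  · rw [pmap_pmap]
    have : P⁻¹ * P = 1 := Matrix.nonsing_inv_mul P hP
    simp_rw [this]
    exact pmap_id p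
  · rw [pmap_pmap]
    have : P * P⁻¹ = 1 := Matrix.mul_nonsing_inv P hP
    simp_rw [this]
    exact pmap_id p

lemma conicSet_congr {P M : Matrix (Fin 3) (Fin 3) F} (hP : IsUnit P.det) :
    conicSet (Pᵀ * M * P) = pmap P hP ⁻¹' conicSet M := by
  ext p
  induction p using Projectivization.ind with
  | h v hv =>
    rw [Set.mem_preimage, pmap_mk' hP hv, mem_conicSet_mk, mem_conicSet_mk]
    constructor <;> intro h <;> [skip; skip] <;>
    · rw [show (Pᵀ * M * P).mulVec v = Pᵀ.mulVec (M.mulVec (P.mulVec v)) by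
        rw [Matrix.mulVec_mulVec, Matrix.mulVec_mulVec, Matrix.mul_assoc]] at *
      rw [Matrix.dotProduct_mulVec v Pᵀ, Matrix.vecMul_transpose] at *
      exact h

def M0 (F : Type) [Field F] : Matrix (Fin 3) (Fin 3) F := !![0,0,1;0,-2,0;1,0,0]

lemma M0_isSymm : (M0 F).IsSymm := by
  rw [Matrix.IsSymm]; unfold M0
  ext i j; fin_cases i <;> fin_cases j <;> simp

lemma M0_det : (M0 F).det = 2 := by
  unfold M0; simp [Matrix.det_fin_three]


section beta
variable (M : Matrix (Fin 3) (Fin 3) F)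

lemma beta_smul_left (a : F) (x y : Fin 3 → F) :
    (a • x) ⬝ᵥ M *ᵥ y = a * (x ⬝ᵥ M *ᵥ y) := by rw [smul_dotProduct]; rfl

lemma beta_smul_right (a : F) (x y : Fin 3 → F) :
    x ⬝ᵥ M *ᵥ (a • y) = a * (x ⬝ᵥ M *ᵥ y) := by
  rw [Matrix.mulVec_smul, dotProduct_smul]; rfl

lemma beta_add_right (x y y' : Fin 3 → F) :
    x ⬝ᵥ M *ᵥ (y + y') = x ⬝ᵥ M *ᵥ y + x ⬝ᵥ M *ᵥ y' := by
  rw [Matrix.mulVec_add, dotProduct_add]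

lemma beta_sub_right (x y y' : Fin 3 → F) :
    x ⬝ᵥ M *ᵥ (y - y') = x ⬝ᵥ M *ᵥ y - x ⬝ᵥ M *ᵥ y' := by
  rw [Matrix.mulVec_sub, dotProduct_sub]

lemma beta_sub_left (x x' y : Fin 3 → F) :
    (x - x') ⬝ᵥ M *ᵥ y = x ⬝ᵥ M *ᵥ y - x' ⬝ᵥ M *ᵥ y := by rw [sub_dotProduct]

lemma beta_add_left (x x' y : Fin 3 → F) :
    (x + x') ⬝ᵥ M *ᵥ y = x ⬝ᵥ M *ᵥ y + x' ⬝ᵥ M *ᵥ y := by rw [add_dotProduct]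

lemma beta_symm (hs : M.IsSymm) (x y : Fin 3 → F) :
    x ⬝ᵥ M *ᵥ y = y ⬝ᵥ M *ᵥ x := by
  rw [dotProduct_mulVec, ← Matrix.vecMul_transpose, hs.eq, dotProduct_comm]

end beta


/-- Chevalley-Warning: a ternary quadratic form over a finite field of odd characteristic
has a nontrivial zero. -/
lemma exists_isotropic [Fintype F] (M : Matrix (Fin 3) (Fin 3) F) :
    ∃ v : Fin 3 → F, v ≠ 0 ∧ v ⬝ᵥ M *ᵥ v = 0 := by
  classical
  set f : MvPolynomial (Fin 3) F :=
    ∑ i : Fin 3, ∑ j : Fin 3, MvPolynomial.C (M i j) * MvPolynomial.X i * MvPolynomial.X j with hf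
  have heval : ∀ x : Fin 3 → F, MvPolynomial.eval x f = x ⬝ᵥ M *ᵥ x := by
    intro x
    simp only [hf, map_sum, _root_.map_mul, MvPolynomial.eval_C, MvPolynomial.eval_X,
      dotProduct, Matrix.mulVec, Finset.mul_sum]
    exact Finset.sum_congr rfl fun i _ => Finset.sum_congr rfl fun j _ => by ring
  have hdeg : f.totalDegree < Fintype.card (Fin 3) := by
    rw [Fintype.card_fin]
    refine lt_of_le_of_lt (le_trans (MvPolynomial.totalDegree_finset_sum _ _) ?_) (by norm_num : (2:ℕ) < 3)
    refine Finset.sup_le fun i _ => le_trans (MvPolynomial.totalDegree_finset_sum _ _) ?_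
    refine Finset.sup_le fun j _ => ?_
    refine le_trans (MvPolynomial.totalDegree_mul _ _) ?_
    have h1 : (MvPolynomial.C (M i j) * MvPolynomial.X i : MvPolynomial (Fin 3) F).totalDegree ≤ 1 :=
      le_trans (MvPolynomial.totalDegree_mul _ _)
        (by simp [MvPolynomial.totalDegree_C, MvPolynomial.totalDegree_X])
    have h2 := MvPolynomial.totalDegree_X (R := F) j
    omega
  obtain ⟨p, hp⟩ := CharP.exists F
  haveI := hp
  have hprime : p.Prime := CharP.char_is_prime F p
  have hdvd := char_dvd_card_solutions p hdeg
  have hpos : 0 < Fintype.card {x : Fin 3 → F // MvPolynomial.eval x f = 0} :=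
    Fintype.card_pos_iff.2 ⟨⟨0, by rw [heval]; simp⟩⟩
  have hcard : 2 ≤ Fintype.card {x : Fin 3 → F // MvPolynomial.eval x f = 0} := by
    have h1 := Nat.le_of_dvd hpos hdvd
    have h2 := hprime.two_le
    omega
  obtain ⟨⟨x, hx⟩, ⟨y, hy⟩, hxy⟩ := Fintype.exists_pair_of_one_lt_card (by omega : 1 < Fintype.card {x : Fin 3 → F // MvPolynomial.eval x f = 0})
  by_cases hx0 : x = 0
  · refine ⟨y, ?_, by rw [← heval]; exact hy⟩
    intro h; exact hxy (by simp [hx0, h])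
  · exact ⟨x, hx0, by rw [← heval]; exact hx⟩


lemma normalize [Fintype F] (h2 : (2:F) ≠ 0) {M : Matrix (Fin 3) (Fin 3) F}
    (hsym : M.IsSymm) (hd : IsUnit M.det) :
    ∃ (P : Matrix (Fin 3) (Fin 3) F) (c : F),
      IsUnit P.det ∧ c ≠ 0 ∧ Pᵀ * M * P = c • M0 F := by
  obtain ⟨v, hv0, hvv⟩ := exists_isotropic M
  have hMinj : Function.Injective (M.mulVec) :=
    Matrix.mulVec_injective_iff_isUnit.2 ((Matrix.isUnit_iff_isUnit_det M).2 hd)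
  have hMv : M *ᵥ v ≠ 0 := fun h => hv0 (hMinj (h.trans (Matrix.mulVec_zero M).symm))
  obtain ⟨i, hi⟩ : ∃ i, (M *ᵥ v) i ≠ 0 := by
    by_contra h; push_neg at h; exact hMv (funext h)
  set w0 : Fin 3 → F := Pi.single i 1 with hw0
  have hs0 : v ⬝ᵥ M *ᵥ w0 = (M *ᵥ v) i := by
    rw [beta_symm M hsym, hw0, single_dotProduct, one_mul]
  set s := v ⬝ᵥ M *ᵥ w0 with hsdef
  have hs : s ≠ 0 := by rw [hs0]; exact hi
  have h2s : (2:F) * s ≠ 0 := mul_ne_zero h2 hs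
  set k := (w0 ⬝ᵥ M *ᵥ w0) / (2*s) with hk
  set w := w0 - k • v with hwdef
  have hvw : v ⬝ᵥ M *ᵥ w = s := by
    simp only [hwdef, beta_sub_right, beta_smul_right, hvv, mul_zero, sub_zero, hsdef]
  have hwv : w ⬝ᵥ M *ᵥ v = s := by rw [beta_symm M hsym]; exact hvw
  have hw0v : w0 ⬝ᵥ M *ᵥ v = s := by rw [beta_symm M hsym]
  have hww : w ⬝ᵥ M *ᵥ w = 0 := by
    rw [hwdef, beta_sub_left, beta_sub_right, beta_sub_right, beta_smul_left, beta_smul_right,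
      beta_smul_right, beta_smul_left, hvv, hw0v]
    rw [show v ⬝ᵥ M *ᵥ w0 = s from hsdef.symm, hk]
    field_simp
    ring
  -- the vector z
  have hwne : w ≠ 0 := by
    intro h; rw [h, Matrix.mulVec_zero, dotProduct_zero] at hvw; exact hs hvw.symm
  have hindep : LinearIndependent F ![v, w] := by
    rw [linearIndependent_fin2]
    constructor
    · show w ≠ 0; exact hwne
    · intro a h
      simp only [Matrix.cons_val_one, Matrix.head_cons, Matrix.cons_val_zero] at h
      have : (a • w) ⬝ᵥ M *ᵥ w = v ⬝ᵥ M *ᵥ w := by rw [h]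
      rw [beta_smul_left, hww, mul_zero, hvw] at this
      exact hs this.symm
  have hc0 : v ⨯₃ w ≠ 0 := crossProduct_ne_zero_iff_linearIndependent.2 hindep
  set z := M⁻¹ *ᵥ (v ⨯₃ w) with hzdef
  have hMz : M *ᵥ z = v ⨯₃ w := by
    rw [hzdef, Matrix.mulVec_mulVec, Matrix.mul_nonsing_inv _ hd, Matrix.one_mulVec]
  have hz0 : z ≠ 0 := fun h => hc0 (by rw [← hMz, h, Matrix.mulVec_zero])
  have hvz : v ⬝ᵥ M *ᵥ z = 0 := by rw [hMz]; exact dot_self_cross v w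
  have hwz : w ⬝ᵥ M *ᵥ z = 0 := by rw [hMz]; exact dot_cross_self v w
  have hzv : z ⬝ᵥ M *ᵥ v = 0 := by rw [beta_symm M hsym]; exact hvz
  have hzw : z ⬝ᵥ M *ᵥ w = 0 := by rw [beta_symm M hsym]; exact hwz
  set t := z ⬝ᵥ M *ᵥ z with htdef
  have ht : t ≠ 0 := by
    intro ht0
    have hli : LinearIndependent F ![v, w, z] := by
      rw [Fintype.linearIndependent_iff]
      intro g hg
      have hsum : g 0 • v + g 1 • w + g 2 • z = 0 := by
        have := hg
        rwa [Fin.sum_univ_three] at this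
      have e0 : (g 0 • v + g 1 • w + g 2 • z) ⬝ᵥ M *ᵥ w = g 0 * s := by
        rw [beta_add_left, beta_add_left, beta_smul_left, beta_smul_left, beta_smul_left,
          hvw, hww, hzw]
        ring
      rw [hsum, zero_dotProduct] at e0
      have hg0 : g 0 = 0 := by
        rcases mul_eq_zero.1 e0.symm with h | h
        · exact h
        · exact absurd h hs
      have e1 : (g 0 • v + g 1 • w + g 2 • z) ⬝ᵥ M *ᵥ v = g 1 * s := by
        rw [beta_add_left, beta_add_left, beta_smul_left, beta_smul_left, beta_smul_left,
          hvv, hwv, hzv]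
        ring
      rw [hsum, zero_dotProduct] at e1
      have hg1 : g 1 = 0 := by
        rcases mul_eq_zero.1 e1.symm with h | h
        · exact h
        · exact absurd h hs
      have hg2 : g 2 = 0 := by
        rw [hg0, hg1, zero_smul, zero_smul, zero_add, zero_add] at hsum
        rcases smul_eq_zero.1 hsum with h | h
        · exact h
        · exact absurd h hz0
      intro j; fin_cases j <;> assumption
    have hspan : Submodule.span F (Set.range ![v, w, z]) = ⊤ :=
      hli.span_eq_top_of_card_eq_finrank (by simp [Module.finrank_pi])
    have hall : ∀ x : Fin 3 → F, (v ⨯₃ w) ⬝ᵥ x = 0 := by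
      intro x
      have hx : x ∈ Submodule.span F (Set.range ![v, w, z]) := by rw [hspan]; trivial
      refine Submodule.span_induction ?_ ?_ ?_ ?_ hx
      · rintro y ⟨j, rfl⟩
        fin_cases j <;>
          simp only [Matrix.cons_val_zero, Matrix.cons_val_one, Matrix.head_cons,
            Matrix.cons_val_two, Matrix.tail_cons]
        · rw [dotProduct_comm]; exact dot_self_cross v w
        · rw [dotProduct_comm]; exact dot_cross_self v w
        · rw [← hMz, dotProduct_comm]; exact ht0
      · exact dotProduct_zero _
      · intro x y _ _ hx hy; rw [dotProduct_add, hx, hy, add_zero]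
      · intro a x _ hx; rw [dotProduct_smul, hx, smul_zero]
    have : v ⨯₃ w = 0 := by
      funext j
      have := hall (Pi.single j 1)
      rwa [dotProduct_single, mul_one] at this
    exact hc0 this
  -- assemble
  set c := -t / 2 with hc
  have hcne : c ≠ 0 := by
    rw [hc]; exact div_ne_zero (neg_ne_zero.2 ht) h2
  set lam := c / s with hlam
  set v' := lam • v with hv'
  set R := Matrix.of ![v', z, w] with hR
  have hRrow : ∀ j : Fin 3, R j = ![v', z, w] j := fun j => rfl
  have hentry : ∀ i j : Fin 3, (R * M * Rᵀ) i j = (R i) ⬝ᵥ M *ᵥ (R j) := by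
    intro i j
    rw [dotProduct_mulVec]
    simp only [Matrix.mul_apply, Matrix.transpose_apply, Matrix.vecMul, dotProduct,
      Finset.sum_mul, Finset.mul_sum]
  have hRMR : R * M * Rᵀ = c • M0 F := by
    ext i j
    rw [hentry]
    fin_cases i <;> fin_cases j
    · show v' ⬝ᵥ M *ᵥ v' = c * 0
      rw [hv', beta_smul_left, beta_smul_right, hvv]; ring
    · show v' ⬝ᵥ M *ᵥ z = c * 0
      rw [hv', beta_smul_left, hvz]; ring
    · show v' ⬝ᵥ M *ᵥ w = c * 1
      rw [hv', beta_smul_left, hvw, hlam]; field_simp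
    · show z ⬝ᵥ M *ᵥ v' = c * 0
      rw [hv', beta_smul_right, hzv]; ring
    · show z ⬝ᵥ M *ᵥ z = c * -2
      rw [show z ⬝ᵥ M *ᵥ z = t from htdef.symm, hc]
      field_simp
    · show z ⬝ᵥ M *ᵥ w = c * 0
      simp only [hzw, mul_zero]
    · show w ⬝ᵥ M *ᵥ v' = c * 1
      rw [hv', beta_smul_right, hwv, hlam]
      field_simp
    · show w ⬝ᵥ M *ᵥ z = c * 0
      simp only [hwz, mul_zero]
    · show w ⬝ᵥ M *ᵥ w = c * 0
      simp only [hww, mul_zero]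
  refine ⟨Rᵀ, c, ?_, hcne, ?_⟩
  · have hdet : R.det * M.det * R.det = (c • M0 F).det := by
      rw [← hRMR, Matrix.det_mul, Matrix.det_mul, Matrix.det_transpose]
    have hM0det : (M0 F).det = 2 := by unfold M0; simp [Matrix.det_fin_three]
    have : (c • M0 F).det ≠ 0 := by
      rw [Matrix.det_smul, hM0det]
      simp only [Fintype.card_fin]
      exact mul_ne_zero (pow_ne_zero _ hcne) h2
    rw [← hdet] at this
    rw [Matrix.det_transpose, isUnit_iff_ne_zero]
    intro h; rw [h] at this; simp at this
  · rw [Matrix.transpose_transpose]; exact hRMR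



def nu (t : F) : Fin 3 → F := ![1, t, t^2]

lemma nu_ne_zero (t : F) : nu t ≠ 0 := by
  intro h; have := congrFun h 0; simp [nu] at this

def e3v (F : Type) [Field F] : Fin 3 → F := ![0, 0, 1]

lemma e3v_ne_zero : (e3v F) ≠ 0 := by
  intro h; have := congrFun h 2; simp [e3v] at this

lemma quad_M0 (v : Fin 3 → F) : v ⬝ᵥ (M0 F) *ᵥ v = 2 * (v 0 * v 2) - 2 * (v 1)^2 := by
  simp [M0, Matrix.mulVec, dotProduct, Fin.sum_univ_three, Matrix.vecHead, Matrix.vecTail,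
    Function.comp]
  ring

lemma quadN_nu (N : Matrix (Fin 3) (Fin 3) F) (t : F) :
    (nu t) ⬝ᵥ N *ᵥ (nu t) = N 0 0 + (N 0 1 + N 1 0) * t + (N 0 2 + N 2 0 + N 1 1) * t^2
      + (N 1 2 + N 2 1) * t^3 + N 2 2 * t^4 := by
  simp [nu, Matrix.mulVec, dotProduct, Fin.sum_univ_three]
  ring

lemma quadN_e3 (N : Matrix (Fin 3) (Fin 3) F) : (e3v F) ⬝ᵥ N *ᵥ (e3v F) = N 2 2 := by
  simp [e3v, Matrix.mulVec, dotProduct, Fin.sum_univ_three]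

noncomputable def cpt : Option F → Pt F
  | none => Projectivization.mk F (e3v F) e3v_ne_zero
  | some t => Projectivization.mk F (nu t) (nu_ne_zero t)

lemma cpt_mem (o : Option F) : cpt o ∈ conicSet (M0 F) := by
  cases o with
  | none =>
    show Projectivization.mk F (e3v F) e3v_ne_zero ∈ _
    rw [mem_conicSet_mk, quad_M0]; simp [e3v]
  | some t =>
    show Projectivization.mk F (nu t) (nu_ne_zero t) ∈ _
    rw [mem_conicSet_mk, quad_M0]
    simp only [nu, Matrix.cons_val_zero, Matrix.cons_val_one, Matrix.head_cons,
      Matrix.cons_val_two, Matrix.tail_cons]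
    ring

lemma C0_eq_range (h2 : (2:F) ≠ 0) : conicSet (M0 F) = Set.range (cpt : Option F → Pt F) := by
  ext p
  constructor
  · intro hp
    induction p using Projectivization.ind with
    | h v hv =>
      rw [mem_conicSet_mk, quad_M0] at hp
      have hq : v 0 * v 2 = (v 1)^2 := by
        have h' : (2:F) * (v 0 * v 2 - (v 1)^2) = 0 := by linear_combination hp
        rcases mul_eq_zero.1 h' with h | h
        · exact absurd h h2
        · exact sub_eq_zero.1 h
      by_cases h0 : v 0 = 0
      · have h1 : v 1 = 0 := by
          have : (v 1)^2 = 0 := by rw [← hq, h0, zero_mul]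
          exact pow_eq_zero_iff (by norm_num) |>.1 this
        have h2v : v 2 ≠ 0 := by
          intro h2v
          apply hv
          funext i; fin_cases i <;> simp [h0, h1, h2v]
        refine ⟨none, ?_⟩
        show Projectivization.mk F (e3v F) e3v_ne_zero = _
        rw [Projectivization.mk_eq_mk_iff]
        refine ⟨Units.mk0 (v 2)⁻¹ (inv_ne_zero h2v), ?_⟩
        funext i; fin_cases i
        · show (v 2)⁻¹ * v 0 = 0
          rw [h0, mul_zero]
        · show (v 2)⁻¹ * v 1 = 0
          rw [h1, mul_zero]
        · show (v 2)⁻¹ * v 2 = 1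
          exact inv_mul_cancel₀ h2v
      · refine ⟨some (v 1 / v 0), ?_⟩
        show Projectivization.mk F (nu (v 1 / v 0)) (nu_ne_zero _) = _
        rw [Projectivization.mk_eq_mk_iff]
        refine ⟨Units.mk0 (v 0)⁻¹ (inv_ne_zero h0), ?_⟩
        funext i; fin_cases i
        · show (v 0)⁻¹ * v 0 = 1
          exact inv_mul_cancel₀ h0
        · show (v 0)⁻¹ * v 1 = v 1 / v 0
          rw [div_eq_inv_mul]
        · show (v 0)⁻¹ * v 2 = (v 1 / v 0)^2
          rw [div_pow, eq_div_iff (pow_ne_zero _ h0)]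
          field_simp
          linear_combination hq
  · rintro ⟨o, rfl⟩; exact cpt_mem o

lemma cpt_injective : Function.Injective (cpt : Option F → Pt F) := by
  intro o o' h
  match o, o' with
  | none, none => rfl
  | some t, some t' =>
    obtain ⟨a, ha⟩ := (Projectivization.mk_eq_mk_iff F _ _ (nu_ne_zero t) (nu_ne_zero t')).1 h
    have h0 : (a:F) * 1 = 1 := congrFun ha 0
    have h1 : (a:F) * t' = t := congrFun ha 1
    rw [mul_one] at h0
    rw [h0, one_mul] at h1
    rw [h1]
  | none, some t =>
    obtain ⟨a, ha⟩ := (Projectivization.mk_eq_mk_iff F _ _ e3v_ne_zero (nu_ne_zero t)).1 h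
    have h0 : (a:F) * 1 = 0 := congrFun ha 0
    rw [mul_one] at h0
    exact absurd h0 a.ne_zero
  | some t, none =>
    obtain ⟨a, ha⟩ := (Projectivization.mk_eq_mk_iff F _ _ (nu_ne_zero t) e3v_ne_zero).1 h
    have h0 : (a:F) * 0 = 1 := congrFun ha 0
    rw [mul_zero] at h0
    exact absurd h0.symm one_ne_zero

lemma C0_ncard [Fintype F] (h2 : (2:F) ≠ 0) :
    (conicSet (M0 F)).ncard = Fintype.card F + 1 := by
  rw [C0_eq_range h2, ← Set.image_univ, Set.ncard_image_of_injective _ cpt_injective,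
    Set.ncard_univ, Nat.card_eq_fintype_card, Fintype.card_option]


lemma entries_to_smul {N : Matrix (Fin 3) (Fin 3) F} (hN : N.IsSymm) (h2 : (2:F) ≠ 0)
    (h00 : N 0 0 = 0) (h01 : N 0 1 + N 1 0 = 0) (h02 : N 0 2 + N 2 0 + N 1 1 = 0)
    (h12 : N 1 2 + N 2 1 = 0) (h22 : N 2 2 = 0) :
    N = N 0 2 • M0 F := by
  have hsym : ∀ i j, N j i = N i j := fun i j => hN.apply i j
  have e01 : N 0 1 = 0 := by
    have h : (2:F) * N 0 1 = 0 := by rw [hsym 0 1] at h01; linear_combination h01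
    rcases mul_eq_zero.1 h with h | h
    · exact absurd h h2
    · exact h
  have e12 : N 1 2 = 0 := by
    have h : (2:F) * N 1 2 = 0 := by rw [hsym 1 2] at h12; linear_combination h12
    rcases mul_eq_zero.1 h with h | h
    · exact absurd h h2
    · exact h
  have e11 : N 1 1 = N 0 2 * (-2) := by
    have := h02
    rw [hsym 0 2] at this
    linear_combination this
  ext i j
  fin_cases i <;> fin_cases j
  · show N 0 0 = N 0 2 * (0:F); rw [h00]; ring
  · show N 0 1 = N 0 2 * (0:F); rw [e01]; ring
  · show N 0 2 = N 0 2 * (1:F); ring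
  · show N 1 0 = N 0 2 * (0:F); rw [hsym 0 1, e01]; ring
  · show N 1 1 = N 0 2 * (-2:F); rw [e11]
  · show N 1 2 = N 0 2 * (0:F); rw [e12]; ring
  · show N 2 0 = N 0 2 * (1:F); rw [hsym 0 2]; ring
  · show N 2 1 = N 0 2 * (0:F); rw [hsym 1 2, e12]; ring
  · show N 2 2 = N 0 2 * (0:F); rw [h22]; ring

lemma five_point [Fintype F] (h2 : (2:F) ≠ 0) {N : Matrix (Fin 3) (Fin 3) F} (hN : N.IsSymm)
    {x : Set (Pt F)} (hx0 : x ⊆ conicSet (M0 F)) (hxN : x ⊆ conicSet N) (hx5 : 5 ≤ x.ncard) :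
    N = N 0 2 • M0 F := by
  classical
  have hxr : x ⊆ Set.range (cpt : Option F → Pt F) := by rw [← C0_eq_range h2]; exact hx0
  set y : Set (Option F) := cpt ⁻¹' x with hy
  have hxy : x = cpt '' y := (Set.image_preimage_eq_of_subset hxr).symm
  have hycard : 5 ≤ y.ncard := by
    rw [hxy, Set.ncard_image_of_injective _ cpt_injective] at hx5; exact hx5
  set T : Set F := some ⁻¹' y with hT
  have hTev : ∀ t ∈ T, (nu t) ⬝ᵥ N *ᵥ (nu t) = 0 := by
    intro t ht
    have hmem : cpt (some t) ∈ conicSet N := hxN ht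
    rwa [show cpt (some t) = Projectivization.mk F (nu t) (nu_ne_zero t) from rfl,
      mem_conicSet_mk] at hmem
  have hfinT : T.Finite := Set.toFinite T
  -- common construction of the cubic part
  set p3 : Polynomial F := Polynomial.C (N 0 0) + Polynomial.C (N 0 1 + N 1 0) * Polynomial.X^1
    + Polynomial.C (N 0 2 + N 2 0 + N 1 1) * Polynomial.X^2
    + Polynomial.C (N 1 2 + N 2 1) * Polynomial.X^3 with hp3
  have hdeg3 : p3.natDegree ≤ 3 := by
    rw [hp3]
    refine le_trans (Polynomial.natDegree_add_le _ _) (max_le (le_trans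
      (Polynomial.natDegree_add_le _ _) (max_le (le_trans (Polynomial.natDegree_add_le _ _)
      (max_le ?_ ?_)) ?_)) ?_)
    · simp
    · exact le_trans (Polynomial.natDegree_C_mul_le _ _) (by simp)
    · exact le_trans (Polynomial.natDegree_C_mul_le _ _) (by simp)
    · exact le_trans (Polynomial.natDegree_C_mul_le _ _) (by simp)
  have key : N 2 2 = 0 ∧ p3 = 0 := by
    by_cases hA : none ∈ y
    · -- the point at infinity is on the conic
      have h22 : N 2 2 = 0 := by
        have hmem : cpt none ∈ conicSet N := hxN hA
        rwa [show cpt none = Projectivization.mk F (e3v F) e3v_ne_zero from rfl,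
          mem_conicSet_mk, quadN_e3] at hmem
      refine ⟨h22, ?_⟩
      have hTeq : some '' T = y \ {none} := by
        ext o
        cases o with
        | none => simp [hT]
        | some t => simp [hT]
      have hTcard : 4 ≤ T.ncard := by
        have := Set.ncard_diff_singleton_of_mem hA
        have himg : (some '' T).ncard = T.ncard :=
          Set.ncard_image_of_injective _ (Option.some_injective F)
        rw [hTeq] at himg
        omega
      have hev3 : ∀ t ∈ T, p3.eval t = 0 := by
        intro t ht
        have := hTev t ht
        rw [quadN_nu] at this
        rw [hp3]
        simp only [Polynomial.eval_add, Polynomial.eval_mul, Polynomial.eval_pow,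
          Polynomial.eval_C, Polynomial.eval_X]
        linear_combination this - (t^4) * h22
      refine Polynomial.eq_zero_of_natDegree_lt_card_of_eval_eq_zero p3
        (f := fun i : ↥hfinT.toFinset => (i : F)) Subtype.val_injective ?_ ?_
      · intro i
        exact hev3 i (hfinT.mem_toFinset.1 i.2)
      · rw [Fintype.card_coe, ← Set.ncard_eq_toFinset_card _ hfinT]
        omega
    · -- all points are affine
      have hTeq : some '' T = y := by
        ext o
        cases o with
        | none => simpa [hT] using fun h => absurd h hA
        | some t => simp [hT]
      have hTcard : 5 ≤ T.ncard := by
        have himg : (some '' T).ncard = T.ncard :=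
          Set.ncard_image_of_injective _ (Option.some_injective F)
        rw [hTeq] at himg
        omega
      set p : Polynomial F := p3 + Polynomial.C (N 2 2) * Polynomial.X^4 with hp
      have hdeg : p.natDegree ≤ 4 := by
        rw [hp]
        refine le_trans (Polynomial.natDegree_add_le _ _) (max_le (le_trans hdeg3 (by norm_num)) ?_)
        exact le_trans (Polynomial.natDegree_C_mul_le _ _) (by simp)
      have hev : ∀ t ∈ T, p.eval t = 0 := by
        intro t ht
        have := hTev t ht
        rw [quadN_nu] at this
        rw [hp, hp3]
        simp only [Polynomial.eval_add, Polynomial.eval_mul, Polynomial.eval_pow,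
          Polynomial.eval_C, Polynomial.eval_X]
        linear_combination this
      have hpzero : p = 0 := by
        refine Polynomial.eq_zero_of_natDegree_lt_card_of_eval_eq_zero p
          (f := fun i : ↥hfinT.toFinset => (i : F)) Subtype.val_injective ?_ ?_
        · intro i
          exact hev i (hfinT.mem_toFinset.1 i.2)
        · rw [Fintype.card_coe, ← Set.ncard_eq_toFinset_card _ hfinT]
          omega
      have h22 : N 2 2 = 0 := by
        have := congrArg (fun q => Polynomial.coeff q 4) hpzero
        simp only [hp, hp3, Polynomial.coeff_add, Polynomial.coeff_C_mul,
          Polynomial.coeff_X_pow, Polynomial.coeff_C, Polynomial.coeff_zero] at this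
        norm_num at this
        exact this
      refine ⟨h22, ?_⟩
      rw [hp, h22] at hpzero
      simpa using hpzero
  obtain ⟨h22, hp3zero⟩ := key
  have c0 : N 0 0 = 0 := by
    have := congrArg (fun q => Polynomial.coeff q 0) hp3zero
    simp only [hp3, Polynomial.coeff_add, Polynomial.coeff_C_mul,
      Polynomial.coeff_X_pow, Polynomial.coeff_C, Polynomial.coeff_zero] at this
    norm_num at this
    exact this
  have c1 : N 0 1 + N 1 0 = 0 := by
    have := congrArg (fun q => Polynomial.coeff q 1) hp3zero
    simp only [hp3, Polynomial.coeff_add, Polynomial.coeff_C_mul,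
      Polynomial.coeff_X_pow, Polynomial.coeff_C, Polynomial.coeff_zero] at this
    norm_num at this
    exact this
  have c2 : N 0 2 + N 2 0 + N 1 1 = 0 := by
    have := congrArg (fun q => Polynomial.coeff q 2) hp3zero
    simp only [hp3, Polynomial.coeff_add, Polynomial.coeff_C_mul,
      Polynomial.coeff_X_pow, Polynomial.coeff_C, Polynomial.coeff_zero] at this
    norm_num at this
    exact this
  have c3 : N 1 2 + N 2 1 = 0 := by
    have := congrArg (fun q => Polynomial.coeff q 3) hp3zero
    simp only [hp3, Polynomial.coeff_add, Polynomial.coeff_C_mul,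
      Polynomial.coeff_X_pow, Polynomial.coeff_C, Polynomial.coeff_zero] at this
    norm_num at this
    exact this
  exact entries_to_smul hN h2 c0 c1 c2 c3 h22


def e1v (F : Type) [Field F] : Fin 3 → F := ![1,0,0]
def e2v (F : Type) [Field F] : Fin 3 → F := ![0,1,0]
def uv (F : Type) [Field F] : Fin 3 → F := ![1,1,1]

lemma e1v_ne_zero : (e1v F) ≠ 0 := by
  intro h; have := congrFun h 0; simp [e1v] at this
lemma e2v_ne_zero : (e2v F) ≠ 0 := by
  intro h; have := congrFun h 1; simp [e2v] at this
lemma uv_ne_zero : (uv F) ≠ 0 := by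
  intro h; have := congrFun h 0; simp [uv] at this

noncomputable def framePts (F : Type) [Field F] : Set (Pt F) :=
  {Projectivization.mk F (e1v F) e1v_ne_zero, Projectivization.mk F (e2v F) e2v_ne_zero,
   Projectivization.mk F (e3v F) e3v_ne_zero, Projectivization.mk F (uv F) uv_ne_zero}

def Mdf (d f : F) : Matrix (Fin 3) (Fin 3) F := !![0,d,f; d,0,-d-f; f,-d-f,0]

lemma Mdf_isSymm (d f : F) : (Mdf d f).IsSymm := by
  rw [Matrix.IsSymm]
  ext i j
  fin_cases i <;> fin_cases j <;> rfl

lemma Mdf_det (d f : F) : (Mdf d f).det = 2 * (d * (f * (-d - f))) := by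
  simp [Mdf, Matrix.det_fin_three]
  ring

lemma quad_e1 (N : Matrix (Fin 3) (Fin 3) F) : (e1v F) ⬝ᵥ N *ᵥ (e1v F) = N 0 0 := by
  simp [e1v, Matrix.mulVec, dotProduct, Fin.sum_univ_three]
lemma quad_e2 (N : Matrix (Fin 3) (Fin 3) F) : (e2v F) ⬝ᵥ N *ᵥ (e2v F) = N 1 1 := by
  simp [e2v, Matrix.mulVec, dotProduct, Fin.sum_univ_three]
lemma quad_uv (N : Matrix (Fin 3) (Fin 3) F) : (uv F) ⬝ᵥ N *ᵥ (uv F) =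
    N 0 0 + N 0 1 + N 0 2 + N 1 0 + N 1 1 + N 1 2 + N 2 0 + N 2 1 + N 2 2 := by
  simp [uv, Matrix.mulVec, dotProduct, Fin.sum_univ_three]
  ring

lemma frame_mem (d f : F) : framePts F ⊆ conicSet (Mdf d f) := by
  intro p hp
  rcases hp with h | h | h | h
  · rw [h, mem_conicSet_mk, quad_e1]; rfl
  · rw [h, mem_conicSet_mk, quad_e2]; rfl
  · rw [h, mem_conicSet_mk, quadN_e3]; rfl
  · rw [Set.mem_singleton_iff.1 h, mem_conicSet_mk, quad_uv]
    show (0:F) + d + f + d + 0 + (-d-f) + f + (-d-f) + 0 = 0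
    ring

lemma frame_shape (h2 : (2:F) ≠ 0) {N : Matrix (Fin 3) (Fin 3) F} (hsym : N.IsSymm)
    (hdet : IsUnit N.det) (hsub : framePts F ⊆ conicSet N) :
    N = Mdf (N 0 1) (N 0 2) ∧ N 0 1 ≠ 0 ∧ N 0 2 ≠ 0 ∧ N 0 1 + N 0 2 ≠ 0 := by
  have hs : ∀ i j, N j i = N i j := fun i j => hsym.apply i j
  have h1 : N 0 0 = 0 := by
    have := hsub (show Projectivization.mk F (e1v F) e1v_ne_zero ∈ framePts F by
      simp [framePts])
    rwa [mem_conicSet_mk, quad_e1] at this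
  have h2' : N 1 1 = 0 := by
    have := hsub (show Projectivization.mk F (e2v F) e2v_ne_zero ∈ framePts F by
      simp [framePts])
    rwa [mem_conicSet_mk, quad_e2] at this
  have h3 : N 2 2 = 0 := by
    have := hsub (show Projectivization.mk F (e3v F) e3v_ne_zero ∈ framePts F by
      simp [framePts])
    rwa [mem_conicSet_mk, quadN_e3] at this
  have h4 : N 1 2 = -(N 0 1) - N 0 2 := by
    have hu := hsub (show Projectivization.mk F (uv F) uv_ne_zero ∈ framePts F by
      simp [framePts])
    rw [mem_conicSet_mk, quad_uv] at hu
    rw [h1, h2', h3, hs 0 1, hs 0 2, hs 1 2] at hu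
    have : (2:F) * (N 0 1 + N 0 2 + N 1 2) = 0 := by linear_combination hu
    rcases mul_eq_zero.1 this with h | h
    · exact absurd h h2
    · linear_combination h
  have hNeq : N = Mdf (N 0 1) (N 0 2) := by
    ext i j
    fin_cases i <;> fin_cases j
    · exact h1
    · rfl
    · rfl
    · exact hs 0 1
    · exact h2'
    · exact h4
    · exact hs 0 2
    · show N 2 1 = -(N 0 1) - N 0 2
      rw [hs 1 2]; exact h4
    · exact h3
  refine ⟨hNeq, ?_, ?_, ?_⟩
  · intro h
    rw [hNeq, isUnit_iff_ne_zero, Mdf_det] at hdet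
    exact hdet (by rw [h]; ring)
  · intro h
    rw [hNeq, isUnit_iff_ne_zero, Mdf_det] at hdet
    exact hdet (by rw [h]; ring)
  · intro h
    rw [hNeq, isUnit_iff_ne_zero, Mdf_det] at hdet
    exact hdet (by rw [show -(N 0 1) - N 0 2 = -(N 0 1 + N 0 2) by ring, h]; ring)

lemma Mdf_scale (d f : F) (hf : f ≠ 0) : Mdf d f = f • Mdf (d/f) 1 := by
  ext i j
  fin_cases i <;> fin_cases j <;>
    simp only [Mdf, Matrix.smul_apply, smul_eq_mul, Fin.reduceFinMk, Matrix.of_apply,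
      Matrix.cons_val, Matrix.cons_val_zero, Matrix.cons_val_one, Matrix.cons_val_two,
      Matrix.head_cons, Matrix.tail_cons] <;>
    show _ = _ <;> field_simp <;> ring


lemma pmap_inv_cancel {P : Matrix (Fin 3) (Fin 3) F} (hP : IsUnit P.det) (x : Pt F) :
    pmap P⁻¹ (Matrix.isUnit_nonsing_inv_det P hP) (pmap P hP x) = x := by
  rw [pmap_pmap]
  have h1 : P⁻¹ * P = 1 := Matrix.nonsing_inv_mul P hP
  simp_rw [h1]
  exact pmap_id x

lemma pmap_cancel_inv {P : Matrix (Fin 3) (Fin 3) F} (hP : IsUnit P.det) (x : Pt F) :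
    pmap P hP (pmap P⁻¹ (Matrix.isUnit_nonsing_inv_det P hP) x) = x := by
  rw [pmap_pmap]
  have h1 : P * P⁻¹ = 1 := Matrix.mul_nonsing_inv P hP
  simp_rw [h1]
  exact pmap_id x

lemma pmap_preimage_eq {P : Matrix (Fin 3) (Fin 3) F} (hP : IsUnit P.det) (S : Set (Pt F)) :
    pmap P hP ⁻¹' S = pmap P⁻¹ (Matrix.isUnit_nonsing_inv_det P hP) '' S := by
  ext x
  constructor
  · intro hx
    exact ⟨pmap P hP x, hx, pmap_inv_cancel hP x⟩
  · rintro ⟨y, hy, rfl⟩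
    show pmap P hP _ ∈ S
    rwa [pmap_cancel_inv hP y]

lemma congr_cancel {P A B : Matrix (Fin 3) (Fin 3) F} (hP : IsUnit P.det)
    (h : Pᵀ * A * P = Pᵀ * B * P) : A = B := by
  have hPT : IsUnit Pᵀ.det := by rwa [Matrix.det_transpose]
  have h1 := congrArg (fun X => (Pᵀ)⁻¹ * X) h
  simp only [← Matrix.mul_assoc, Matrix.nonsing_inv_mul _ hPT, Matrix.one_mul] at h1
  have h2 := congrArg (fun X => X * P⁻¹) h1
  simp only [Matrix.mul_assoc, Matrix.mul_nonsing_inv _ hP, Matrix.mul_one] at h2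
  simpa [← Matrix.mul_assoc] using h2

lemma transpose_congr_isSymm {P N : Matrix (Fin 3) (Fin 3) F} (hN : N.IsSymm) :
    (Pᵀ * N * P).IsSymm := by
  rw [Matrix.IsSymm, Matrix.transpose_mul, Matrix.transpose_mul, Matrix.transpose_transpose,
    hN.eq, Matrix.mul_assoc]

lemma proper_image {P : Matrix (Fin 3) (Fin 3) F} (hP : IsUnit P.det)
    {S : Set (Pt F)} (hS : IsProperConic S) : IsProperConic (pmap P hP '' S) := by
  obtain ⟨N, hsym, hdet, rfl⟩ := hS
  have hPi : IsUnit (P⁻¹).det := Matrix.isUnit_nonsing_inv_det P hP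
  refine ⟨(P⁻¹)ᵀ * N * P⁻¹, transpose_congr_isSymm hsym, ?_, ?_⟩
  · rw [Matrix.det_mul, Matrix.det_mul, Matrix.det_transpose]
    exact (hPi.mul hdet).mul hPi
  · have key : conicSet N = pmap P hP ⁻¹' conicSet ((P⁻¹)ᵀ * N * P⁻¹) := by
      rw [← conicSet_congr hP]
      have : Pᵀ * ((P⁻¹)ᵀ * N * P⁻¹) * P = N := by
        have h1 : Pᵀ * (P⁻¹)ᵀ = 1 := by
          rw [← Matrix.transpose_mul, Matrix.nonsing_inv_mul P hP, Matrix.transpose_one]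
        have h2 : P⁻¹ * P = 1 := Matrix.nonsing_inv_mul P hP
        calc Pᵀ * ((P⁻¹)ᵀ * N * P⁻¹) * P = (Pᵀ * (P⁻¹)ᵀ) * N * (P⁻¹ * P) := by
              simp only [Matrix.mul_assoc]
        _ = N := by rw [h1, h2, Matrix.one_mul, Matrix.mul_one]
      rw [this]
    rw [key, Set.image_preimage_eq _ (pmap_bijective hP).2]

lemma proper_image_iff {P : Matrix (Fin 3) (Fin 3) F} (hP : IsUnit P.det)
    {S : Set (Pt F)} : IsProperConic (pmap P hP '' S) ↔ IsProperConic S := by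
  constructor
  · intro h
    have := proper_image (Matrix.isUnit_nonsing_inv_det P hP) h
    have heq : pmap P⁻¹ (Matrix.isUnit_nonsing_inv_det P hP) '' (pmap P hP '' S) = S := by
      rw [Set.image_image]
      have : ∀ x ∈ S, pmap P⁻¹ (Matrix.isUnit_nonsing_inv_det P hP) (pmap P hP x) = x :=
        fun x _ => pmap_inv_cancel hP x
      rw [Set.image_congr this]
      exact Set.image_id S
    rwa [heq] at this
  · exact proper_image hP

lemma count_transport {P : Matrix (Fin 3) (Fin 3) F} (hP : IsUnit P.det) (A : Set (Pt F)) :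
    {S : Set (Pt F) | IsProperConic S ∧ pmap P hP '' A ⊆ S}.ncard
      = {S : Set (Pt F) | IsProperConic S ∧ A ⊆ S}.ncard := by
  have himg : {S : Set (Pt F) | IsProperConic S ∧ pmap P hP '' A ⊆ S}
      = (Set.image (pmap P hP)) '' {S : Set (Pt F) | IsProperConic S ∧ A ⊆ S} := by
    ext S'
    constructor
    · rintro ⟨hprop, hsub⟩
      refine ⟨pmap P hP ⁻¹' S', ⟨?_, ?_⟩, Set.image_preimage_eq _ (pmap_bijective hP).2⟩
      · rw [pmap_preimage_eq hP]
        exact proper_image _ hprop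
      · exact Set.image_subset_iff.1 hsub
    · rintro ⟨S, ⟨hprop, hsub⟩, rfl⟩
      exact ⟨proper_image hP hprop, Set.image_mono hsub⟩
  rw [himg, Set.ncard_image_of_injective _ (Set.image_injective.2 (pmap_bijective hP).1)]

lemma main_transport {P : Matrix (Fin 3) (Fin 3) F} (hP : IsUnit P.det) (C : Set (Pt F)) :
    {S : Set (Pt F) | IsProperConic S ∧ S ≠ pmap P hP '' C
        ∧ (S ∩ pmap P hP '' C).ncard = 4}.ncard
      = {S : Set (Pt F) | IsProperConic S ∧ S ≠ C ∧ (S ∩ C).ncard = 4}.ncard := by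
  have hinj := (pmap_bijective hP).1
  have himg : {S : Set (Pt F) | IsProperConic S ∧ S ≠ pmap P hP '' C
        ∧ (S ∩ pmap P hP '' C).ncard = 4}
      = (Set.image (pmap P hP)) '' {S : Set (Pt F) | IsProperConic S ∧ S ≠ C
        ∧ (S ∩ C).ncard = 4} := by
    ext S'
    constructor
    · rintro ⟨hprop, hne, hcard⟩
      refine ⟨pmap P hP ⁻¹' S', ⟨?_, ?_, ?_⟩, Set.image_preimage_eq _ (pmap_bijective hP).2⟩
      · rw [pmap_preimage_eq hP]
        exact proper_image _ hprop
      · intro h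
        apply hne
        rw [← Set.image_preimage_eq S' (pmap_bijective hP).2, h]
      · rw [show pmap P hP ⁻¹' S' ∩ C = pmap P hP ⁻¹' (S' ∩ pmap P hP '' C) by
          rw [Set.preimage_inter, Set.preimage_image_eq _ hinj]]
        rw [pmap_preimage_eq hP, Set.ncard_image_of_injective _
          (pmap_bijective (Matrix.isUnit_nonsing_inv_det P hP)).1]
        exact hcard
    · rintro ⟨S, ⟨hprop, hne, hcard⟩, rfl⟩
      refine ⟨proper_image hP hprop, ?_, ?_⟩
      · intro h
        exact hne (Set.image_injective.2 hinj h)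
      · rw [← Set.image_inter hinj, Set.ncard_image_of_injective _ hinj]
        exact hcard
  rw [himg, Set.ncard_image_of_injective _ (Set.image_injective.2 hinj)]


lemma Mdf_detunit (h2 : (2:F) ≠ 0) {a : F} (h0 : a ≠ 0) (h1 : a ≠ -1) :
    IsUnit (Mdf a 1).det := by
  rw [Mdf_det, isUnit_iff_ne_zero]
  refine mul_ne_zero h2 (mul_ne_zero h0 (mul_ne_zero one_ne_zero ?_))
  intro h
  apply h1
  linear_combination -h

lemma Mdf_inj [Fintype F] (h2 : (2:F) ≠ 0) {d d' : F} (hd0 : d ≠ 0) (hd1 : d ≠ -1)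
    (hd0' : d' ≠ 0) (hd1' : d' ≠ -1)
    (h : conicSet (Mdf d 1) = conicSet (Mdf d' 1)) : d = d' := by
  by_cases hcard : 4 ≤ Fintype.card F
  · obtain ⟨P, c, hP, hc, hPA⟩ := normalize h2 (Mdf_isSymm d 1) (Mdf_detunit h2 hd0 hd1)
    have hCA : conicSet (Pᵀ * Mdf d 1 * P) = conicSet (M0 F) := by
      rw [hPA, conicSet_smul hc]
    have hCB : conicSet (Pᵀ * Mdf d' 1 * P) = conicSet (M0 F) := by
      calc conicSet (Pᵀ * Mdf d' 1 * P) = pmap P hP ⁻¹' conicSet (Mdf d' 1) :=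
            conicSet_congr hP
      _ = pmap P hP ⁻¹' conicSet (Mdf d 1) := by rw [h]
      _ = conicSet (Pᵀ * Mdf d 1 * P) := (conicSet_congr hP).symm
      _ = conicSet (M0 F) := hCA
    set N := Pᵀ * Mdf d' 1 * P with hNdef
    have hNsym : N.IsSymm := transpose_congr_isSymm (Mdf_isSymm d' 1)
    have h5 : N = N 0 2 • M0 F := by
      refine five_point h2 hNsym (le_refl (conicSet (M0 F))) ?_ ?_
      · exact Set.Subset.antisymm_iff.1 hCB.symm |>.1
      · rw [C0_ncard h2]
        omega
    have hmain : Pᵀ * Mdf d' 1 * P = Pᵀ * ((N 0 2 * c⁻¹) • Mdf d 1) * P := by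
      have e1 : Pᵀ * ((N 0 2 * c⁻¹) • Mdf d 1) * P = (N 0 2 * c⁻¹) • (Pᵀ * Mdf d 1 * P) := by
        rw [Matrix.mul_smul, Matrix.smul_mul]
      rw [e1, hPA, smul_smul]
      rw [show N 0 2 * c⁻¹ * c = N 0 2 by field_simp]
      exact h5
    have hBA : Mdf d' 1 = (N 0 2 * c⁻¹) • Mdf d 1 := congr_cancel hP hmain
    have h02 : (1:F) = (N 0 2 * c⁻¹) * 1 := by
      have := congrFun (congrFun hBA 0) 2
      simpa [Mdf] using this
    have h01 : d' = (N 0 2 * c⁻¹) * d := by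
      have := congrFun (congrFun hBA 0) 1
      simpa [Mdf] using this
    have hk : N 0 2 * c⁻¹ = 1 := by linear_combination -h02
    rw [h01, hk, one_mul]
  · -- card F = 3
    have hcard2 : 1 < Fintype.card F := Fintype.one_lt_card
    have hq3 : Fintype.card F = 3 := by
      have hne2 : Fintype.card F ≠ 2 := by
        intro hc2
        apply h2
        have := FiniteField.cast_card_eq_zero F
        rwa [hc2] at this
        
      omega
    have cube : ∀ x : F, x^3 = x := fun x => by rw [← hq3]; exact FiniteField.pow_card x
    have hone : ∀ x : F, x ≠ 0 → x ≠ -1 → x = 1 := by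
      intro x hx0 hx1
      have h' : x * ((x - 1) * (x + 1)) = 0 := by linear_combination cube x
      rcases mul_eq_zero.1 h' with hh | hh
      · exact absurd hh hx0
      · rcases mul_eq_zero.1 hh with hh | hh
        · linear_combination hh
        · exact absurd (by linear_combination hh) hx1
    rw [hone d hd0 hd1, hone d' hd0' hd1']

lemma frame_count [Fintype F] (h2 : (2:F) ≠ 0) :
    {S : Set (Pt F) | IsProperConic S ∧ framePts F ⊆ S}.ncard = Fintype.card F - 2 := by
  classical
  set D : Set F := {d : F | d ≠ 0 ∧ d ≠ -1} with hD
  have seteq : {S : Set (Pt F) | IsProperConic S ∧ framePts F ⊆ S}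
      = (fun d => conicSet (Mdf d 1)) '' D := by
    ext S
    constructor
    · rintro ⟨⟨N, hsym, hdet, rfl⟩, hsub⟩
      obtain ⟨hNeq, ha, hb, hab⟩ := frame_shape h2 hsym hdet hsub
      refine ⟨N 0 1 / N 0 2, ⟨div_ne_zero ha hb, ?_⟩, ?_⟩
      · intro hcon
        apply hab
        have : N 0 1 = -(N 0 2) := by
          field_simp at hcon
          linear_combination hcon
        rw [this]; ring
      · show conicSet (Mdf (N 0 1 / N 0 2) 1) = conicSet N
        rw [show conicSet N = conicSet (Mdf (N 0 1) (N 0 2)) by rw [← hNeq]]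
        rw [Mdf_scale _ _ hb, conicSet_smul hb]
    · rintro ⟨d, ⟨hd0, hd1⟩, rfl⟩
      refine ⟨⟨Mdf d 1, Mdf_isSymm d 1, Mdf_detunit h2 hd0 hd1, rfl⟩, frame_mem d 1⟩
  rw [seteq, Set.ncard_image_of_injOn (fun a ha b hb hab => Mdf_inj h2 ha.1 ha.2 hb.1 hb.2 hab)]
  have hDeq : D = (Set.univ : Set F) \ {0, -1} := by
    ext d
    simp [hD]
  rw [hDeq, Set.ncard_diff (Set.subset_univ _), Set.ncard_univ, Nat.card_eq_fintype_card,
    Set.ncard_pair (fun hcon => one_ne_zero (neg_eq_zero.1 hcon.symm))]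


def vrep : Option F → (Fin 3 → F)
  | none => e3v F
  | some t => nu t

lemma vrep_ne_zero (o : Option F) : vrep o ≠ 0 := by
  cases o
  · exact e3v_ne_zero
  · exact nu_ne_zero _

lemma cpt_eq_mk_vrep (o : Option F) : cpt o = Projectivization.mk F (vrep o) (vrep_ne_zero o) := by
  cases o <;> rfl

lemma mk_smul_eq {a : F} (ha : a ≠ 0) {v : Fin 3 → F} (hv : v ≠ 0) :
    Projectivization.mk F (a • v) (smul_ne_zero ha hv) = Projectivization.mk F v hv := by
  rw [Projectivization.mk_eq_mk_iff]
  exact ⟨Units.mk0 a ha, rfl⟩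

lemma mk_congr {v w : Fin 3 → F} (hv : v ≠ 0) (hw : w ≠ 0) (h : v = w) :
    Projectivization.mk F v hv = Projectivization.mk F w hw := by subst h; rfl

lemma triple_det {o1 o2 o3 : Option F} (h12 : o1 ≠ o2) (h13 : o1 ≠ o3) (h23 : o2 ≠ o3) :
    (Matrix.of ![vrep o1, vrep o2, vrep o3]).det ≠ 0 := by
  have hsub : ∀ x y : F, x ≠ y → x - y ≠ 0 := fun x y h => sub_ne_zero.2 h
  match o1, o2, o3 with
  | none, none, _ => exact absurd rfl h12
  | none, some b, none => exact absurd rfl h13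
  | some a, none, none => exact absurd rfl h23
  | none, some b, some c =>
    have hbc : b ≠ c := fun h => h23 (by rw [h])
    have : (Matrix.of ![vrep (none : Option F), vrep (some b), vrep (some c)]).det = c - b := by
      simp [vrep, nu, e3v, Matrix.det_fin_three, Matrix.vecHead, Matrix.vecTail, Function.comp]
    rw [this]
    exact hsub _ _ (Ne.symm hbc)
  | some a, none, some c =>
    have hac : a ≠ c := fun h => h13 (by rw [h])
    have : (Matrix.of ![vrep (some a), vrep (none : Option F), vrep (some c)]).det = a - c := by
      simp [vrep, nu, e3v, Matrix.det_fin_three, Matrix.vecHead, Matrix.vecTail, Function.comp]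
      ring
    rw [this]
    exact hsub _ _ hac
  | some a, some b, none =>
    have hab : a ≠ b := fun h => h12 (by rw [h])
    have : (Matrix.of ![vrep (some a), vrep (some b), vrep (none : Option F)]).det = b - a := by
      simp [vrep, nu, e3v, Matrix.det_fin_three, Matrix.vecHead, Matrix.vecTail, Function.comp]
    rw [this]
    exact hsub _ _ (Ne.symm hab)
  | some a, some b, some c =>
    have hab : a ≠ b := fun h => h12 (by rw [h])
    have hac : a ≠ c := fun h => h13 (by rw [h])
    have hbc : b ≠ c := fun h => h23 (by rw [h])
    have : (Matrix.of ![vrep (some a), vrep (some b), vrep (some c)]).det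
        = (b - a) * ((c - a) * (c - b)) := by
      simp [vrep, nu, Matrix.det_fin_three, Matrix.vecHead, Matrix.vecTail, Function.comp]
      ring
    rw [this]
    exact mul_ne_zero (hsub _ _ (Ne.symm hab))
      (mul_ne_zero (hsub _ _ (Ne.symm hac)) (hsub _ _ (Ne.symm hbc)))

lemma ncard_four {α : Type} {s : Set α} (hs : s.Finite) (h : s.ncard = 4) :
    ∃ a b c d : α, a ≠ b ∧ a ≠ c ∧ a ≠ d ∧ b ≠ c ∧ b ≠ d ∧ c ≠ d ∧ s = {a, b, c, d} := by
  rw [show (4:ℕ) = 3 + 1 from rfl, Set.ncard_eq_succ hs] at h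
  obtain ⟨a, t, hat, rfl, ht3⟩ := h
  rw [Set.ncard_eq_three] at ht3
  obtain ⟨b, c, d, hbc, hbd, hcd, rfl⟩ := ht3
  refine ⟨a, b, c, d, ?_, ?_, ?_, hbc, hbd, hcd, rfl⟩ <;> intro he <;> apply hat <;> simp [he]

lemma four_point_transport [Fintype F] (h2 : (2:F) ≠ 0) {T : Set (Pt F)}
    (hT : T ⊆ conicSet (M0 F)) (hT4 : T.ncard = 4) :
    ∃ (P : Matrix (Fin 3) (Fin 3) F) (hP : IsUnit P.det), pmap P hP '' framePts F = T := by
  classical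
  have hTr : T ⊆ Set.range (cpt : Option F → Pt F) := by rw [← C0_eq_range h2]; exact hT
  set O : Set (Option F) := cpt ⁻¹' T with hO
  have hTO : T = cpt '' O := (Set.image_preimage_eq_of_subset hTr).symm
  have hO4 : O.ncard = 4 := by
    rw [hTO, Set.ncard_image_of_injective _ cpt_injective] at hT4; exact hT4
  obtain ⟨o1, o2, o3, o4, h12, h13, h14, h23, h24, h34, hOeq⟩ :=
    ncard_four (Set.toFinite O) hO4
  set v1 := vrep o1
  set v2 := vrep o2
  set v3 := vrep o3
  set v4 := vrep o4
  set R3 : Matrix (Fin 3) (Fin 3) F := Matrix.of ![v1, v2, v3] with hR3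
  have hR3det : IsUnit R3ᵀ.det := by
    rw [Matrix.det_transpose, isUnit_iff_ne_zero]
    exact triple_det h12 h13 h23
  set al : Fin 3 → F := (R3ᵀ)⁻¹ *ᵥ v4 with hal
  have halv : R3ᵀ *ᵥ al = v4 := by
    rw [hal, Matrix.mulVec_mulVec, Matrix.mul_nonsing_inv _ hR3det, Matrix.one_mulVec]
  have hsum : al 0 • v1 + al 1 • v2 + al 2 • v3 = v4 := by
    rw [← halv]
    funext j
    simp [Matrix.mulVec, dotProduct, Fin.sum_univ_three, Matrix.transpose_apply, hR3]
    ring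
  -- coefficients nonzero
  have hcoef : ∀ (w2 w3 : Fin 3 → F) (k2 k3 : F), v4 = k2 • w2 + k3 • w3 →
      v4 ⬝ᵥ (w2 ⨯₃ w3) = 0 := by
    intro w2 w3 k2 k3 hv4
    rw [hv4, add_dotProduct, smul_dotProduct, smul_dotProduct, dot_self_cross, dot_cross_self]
    simp
  have ha : al 0 ≠ 0 := by
    intro h0
    have h4 : v4 = al 1 • v2 + al 2 • v3 := by rw [← hsum, h0]; simp
    have := hcoef v2 v3 _ _ h4
    rw [triple_product_eq_det] at this
    exact triple_det (Ne.symm h24) (Ne.symm h34) h23 (by exact this)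
  have hb : al 1 ≠ 0 := by
    intro h0
    have h4 : v4 = al 0 • v1 + al 2 • v3 := by rw [← hsum, h0]; simp
    have := hcoef v1 v3 _ _ h4
    rw [triple_product_eq_det] at this
    exact triple_det (Ne.symm h14) (Ne.symm h34) h13 (by exact this)
  have hc : al 2 ≠ 0 := by
    intro h0
    have h4 : v4 = al 0 • v1 + al 1 • v2 := by rw [← hsum, h0]; simp
    have := hcoef v1 v2 _ _ h4
    rw [triple_product_eq_det] at this
    exact triple_det (Ne.symm h14) (Ne.symm h24) h12 (by exact this)
  -- the matrix
  set R : Matrix (Fin 3) (Fin 3) F := Matrix.of ![al 0 • v1, al 1 • v2, al 2 • v3] with hRdef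
  have hRD : R = Matrix.diagonal ![al 0, al 1, al 2] * R3 := by
    ext i j
    rw [Matrix.diagonal_mul]
    fin_cases i <;> simp [hRdef, hR3]
  have hRdet : IsUnit Rᵀ.det := by
    rw [Matrix.det_transpose, hRD, Matrix.det_mul, Matrix.det_diagonal, isUnit_iff_ne_zero]
    refine mul_ne_zero ?_ (by rw [← Matrix.det_transpose]; exact hR3det.ne_zero)
    simp [Fin.prod_univ_three]
    exact ⟨⟨ha, hb⟩, hc⟩
  refine ⟨Rᵀ, hRdet, ?_⟩
  have hmv : ∀ x : Fin 3 → F, Rᵀ *ᵥ x = fun j => x 0 * R 0 j + x 1 * R 1 j + x 2 * R 2 j := by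
    intro x
    funext j
    simp [Matrix.mulVec, dotProduct, Fin.sum_univ_three, Matrix.transpose_apply]
    ring
  have he1 : Rᵀ *ᵥ (e1v F) = al 0 • v1 := by
    rw [hmv]; funext j; simp [e1v, hRdef]
  have he2 : Rᵀ *ᵥ (e2v F) = al 1 • v2 := by
    rw [hmv]; funext j; simp [e2v, hRdef]
  have he3 : Rᵀ *ᵥ (e3v F) = al 2 • v3 := by
    rw [hmv]; funext j; simp [e3v, hRdef]
  have hu : Rᵀ *ᵥ (uv F) = v4 := by
    rw [hmv, ← hsum]; funext j; simp [uv, hRdef]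
  have img1 : pmap Rᵀ hRdet (Projectivization.mk F (e1v F) e1v_ne_zero) = cpt o1 := by
    rw [pmap_mk' hRdet e1v_ne_zero, cpt_eq_mk_vrep,
      mk_congr _ (smul_ne_zero ha (vrep_ne_zero o1)) he1]
    exact mk_smul_eq ha (vrep_ne_zero o1)
  have img2 : pmap Rᵀ hRdet (Projectivization.mk F (e2v F) e2v_ne_zero) = cpt o2 := by
    rw [pmap_mk' hRdet e2v_ne_zero, cpt_eq_mk_vrep,
      mk_congr _ (smul_ne_zero hb (vrep_ne_zero o2)) he2]
    exact mk_smul_eq hb (vrep_ne_zero o2)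
  have img3 : pmap Rᵀ hRdet (Projectivization.mk F (e3v F) e3v_ne_zero) = cpt o3 := by
    rw [pmap_mk' hRdet e3v_ne_zero, cpt_eq_mk_vrep,
      mk_congr _ (smul_ne_zero hc (vrep_ne_zero o3)) he3]
    exact mk_smul_eq hc (vrep_ne_zero o3)
  have img4 : pmap Rᵀ hRdet (Projectivization.mk F (uv F) uv_ne_zero) = cpt o4 := by
    rw [pmap_mk' hRdet uv_ne_zero, cpt_eq_mk_vrep, mk_congr _ (vrep_ne_zero o4) hu]
  rw [framePts]
  rw [Set.image_insert_eq, Set.image_insert_eq, Set.image_insert_eq, Set.image_singleton]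
  rw [img1, img2, img3, img4, hTO, hOeq]
  rw [Set.image_insert_eq, Set.image_insert_eq, Set.image_insert_eq, Set.image_singleton]


instance ptFinite [Fintype F] : Finite (Pt F) := Quotient.finite _

lemma contains_five [Fintype F] (h2 : (2:F) ≠ 0) {N : Matrix (Fin 3) (Fin 3) F}
    (hsym : N.IsSymm) (hdet : IsUnit N.det) {x : Set (Pt F)}
    (hx0 : x ⊆ conicSet (M0 F)) (hxN : x ⊆ conicSet N) (hx5 : 5 ≤ x.ncard) :
    conicSet N = conicSet (M0 F) := by
  have h5 := five_point h2 hsym hx0 hxN hx5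
  have h02 : N 0 2 ≠ 0 := by
    intro h0
    rw [h5, h0, zero_smul] at hdet
    simp [Matrix.det_zero] at hdet
  rw [h5, conicSet_smul h02]

lemma main_C0 [Fintype F] (h2 : (2:F) ≠ 0) :
    {S : Set (Pt F) | IsProperConic S ∧ S ≠ conicSet (M0 F)
      ∧ (S ∩ conicSet (M0 F)).ncard = 4}.ncard
      = (Fintype.card F + 1).choose 4 * (Fintype.card F - 3) := by
  classical
  set q := Fintype.card F with hq
  set C0 : Set (Pt F) := conicSet (M0 F) with hC0
  set SS : Set (Set (Pt F)) := {S | IsProperConic S ∧ S ≠ C0 ∧ (S ∩ C0).ncard = 4} with hSS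
  have hfiber : ∀ T : Set (Pt F), T ⊆ C0 → T.ncard = 4 →
      {S | S ∈ SS ∧ S ∩ C0 = T} = ({S | IsProperConic S ∧ T ⊆ S} \ {C0}) := by
    intro T hTsub hT4
    ext S
    constructor
    · rintro ⟨⟨hp, hne, _⟩, hST⟩
      refine ⟨⟨hp, by rw [← hST]; exact Set.inter_subset_left⟩, ?_⟩
      simpa using hne
    · rintro ⟨⟨hp, hTS⟩, hne⟩
      have hne' : S ≠ C0 := by simpa using hne
      have hint : S ∩ C0 = T := by
        refine Set.Subset.antisymm ?_ (Set.subset_inter hTS hTsub)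
        by_contra hcon
        obtain ⟨z, hz, hzT⟩ := Set.not_subset.1 hcon
        have h5sub : insert z T ⊆ S ∩ C0 :=
          Set.insert_subset_iff.2 ⟨hz, Set.subset_inter hTS hTsub⟩
        have h5card : 5 ≤ (insert z T).ncard := by
          rw [Set.ncard_insert_of_notMem hzT (Set.toFinite T), hT4]
        obtain ⟨N, hsym, hdet, rfl⟩ := hp
        exact hne' (contains_five h2 hsym hdet
          (h5sub.trans Set.inter_subset_right) (h5sub.trans Set.inter_subset_left) h5card)
      exact ⟨⟨hp, hne', by rw [hint]; exact hT4⟩, hint⟩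
  have hfibcard : ∀ T : Set (Pt F), T ⊆ C0 → T.ncard = 4 →
      {S | S ∈ SS ∧ S ∩ C0 = T}.ncard = q - 3 := by
    intro T hsub h4
    rw [hfiber T hsub h4]
    obtain ⟨P, hP, hPT⟩ := four_point_transport h2 hsub h4
    have hcount : {S : Set (Pt F) | IsProperConic S ∧ T ⊆ S}.ncard = q - 2 := by
      rw [← hPT, count_transport hP, frame_count h2]
    have hC0mem : C0 ∈ {S : Set (Pt F) | IsProperConic S ∧ T ⊆ S} :=
      ⟨⟨M0 F, M0_isSymm, by rw [M0_det]; exact isUnit_iff_ne_zero.2 h2, rfl⟩, hsub⟩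
    rw [Set.ncard_diff_singleton_of_mem hC0mem, hcount]
    omega
  -- Finset assembly
  have hfinS : SS.Finite := Set.toFinite SS
  have hfinC : C0.Finite := Set.toFinite C0
  set Sf : Finset (Set (Pt F)) := hfinS.toFinset with hSf
  set C0f : Finset (Pt F) := hfinC.toFinset with hC0f
  set Tf : Finset (Set (Pt F)) :=
    (Finset.powersetCard 4 C0f).image (fun t : Finset (Pt F) => (t : Set (Pt F))) with hTf
  have hTf_mem : ∀ T : Set (Pt F), T ∈ Tf ↔ T ⊆ C0 ∧ T.ncard = 4 := by
    intro T
    rw [hTf, Finset.mem_image]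
    constructor
    · rintro ⟨t, ht, rfl⟩
      rw [Finset.mem_powersetCard] at ht
      refine ⟨?_, ?_⟩
      · intro x hx
        have := ht.1 hx
        rwa [hC0f, Set.Finite.mem_toFinset] at this
      · rw [Set.ncard_coe_finset, ht.2]
    · rintro ⟨hsub, h4⟩
      have hTfin : T.Finite := Set.toFinite T
      refine ⟨hTfin.toFinset, ?_, by simp⟩
      rw [Finset.mem_powersetCard]
      constructor
      · intro x hx
        rw [Set.Finite.mem_toFinset] at hx
        rw [hC0f, Set.Finite.mem_toFinset]
        exact hsub hx
      · rw [← Set.ncard_eq_toFinset_card _ hTfin, h4]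
  have hmap : ∀ S ∈ Sf, S ∩ C0 ∈ Tf := by
    intro S hS
    rw [hSf, Set.Finite.mem_toFinset] at hS
    rw [hTf_mem]
    exact ⟨Set.inter_subset_right, hS.2.2⟩
  have hsum := Finset.card_eq_sum_card_fiberwise hmap
  have hfib_eq : ∀ T ∈ Tf, (Sf.filter (fun S => S ∩ C0 = T)).card = q - 3 := by
    intro T hT
    rw [hTf_mem] at hT
    have : (Sf.filter (fun S => S ∩ C0 = T) : Finset (Set (Pt F)))
        = (Set.toFinite {S | S ∈ SS ∧ S ∩ C0 = T}).toFinset := by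
      ext S
      simp only [hSf, Finset.mem_filter, Set.Finite.mem_toFinset, Set.mem_setOf_eq]
    rw [this, ← Set.ncard_eq_toFinset_card _ (Set.toFinite _)]
    exact hfibcard T hT.1 hT.2
  have hTf_card : Tf.card = (q + 1).choose 4 := by
    rw [hTf, Finset.card_image_of_injective _ Finset.coe_injective,
      Finset.card_powersetCard]
    congr 1
    rw [hC0f, ← Set.ncard_eq_toFinset_card _ hfinC, hC0, C0_ncard h2]
  rw [Set.ncard_eq_toFinset_card _ hfinS]
  rw [show hfinS.toFinset = Sf from rfl, hsum]
  rw [Finset.sum_congr rfl hfib_eq, Finset.sum_const, smul_eq_mul, hTf_card]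

end ConicAux

/-- In `PG(2,q)`, `q` an odd prime power, for a fixed proper conic `C` there are exactly
`binom(q+1,4) * (q-3)` proper conics meeting `C` in exactly four points. -/
theorem num_proper_conics_meeting_in_four_points
    (F : Type) [Field F] [Fintype F] (hq : Odd (Fintype.card F))
    (C : Set (Projectivization F (Fin 3 → F))) (hC : IsProperConic C) :
    {S : Set (Projectivization F (Fin 3 → F)) |
        IsProperConic S ∧ S ≠ C ∧ (S ∩ C).ncard = 4}.ncard
      = (Fintype.card F + 1).choose 4 * (Fintype.card F - 3) := by
  classical
  have h2 : (2:F) ≠ 0 := by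
    intro h
    have hdvd : ringChar F ∣ 2 := ringChar.dvd (by exact_mod_cast h)
    have hprime : (ringChar F).Prime := CharP.char_is_prime F (ringChar F)
    have hchar2 : ringChar F = 2 := (Nat.prime_dvd_prime_iff_eq hprime Nat.prime_two).1 hdvd
    have hcdvd : ringChar F ∣ Fintype.card F := by
      rw [← CharP.cast_eq_zero_iff F (ringChar F) (Fintype.card F)]
      exact FiniteField.cast_card_eq_zero F
    rw [hchar2] at hcdvd
    rw [Nat.odd_iff] at hq
    omega
  obtain ⟨M, hsym, hdet, rfl⟩ := hC
  obtain ⟨P, c, hP, hc, hPM⟩ := ConicAux.normalize h2 hsym hdet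
  have hC0 : conicSet M = ConicAux.pmap P hP '' conicSet (ConicAux.M0 F) := by
    rw [← ConicAux.conicSet_smul hc (ConicAux.M0 F), ← hPM, ConicAux.conicSet_congr hP,
      Set.image_preimage_eq _ (ConicAux.pmap_bijective hP).2]
  rw [hC0, ConicAux.main_transport hP, ConicAux.main_C0 h2]
end

section
/- Let q be an odd prime power and let C, C' be proper conics in PG(2,q) in nested position. Then C and C' are disjoint and have no tangent line in common. -/
set_option maxHeartbeats 1000000

open Matrix

/-- A line of `PG(2,q)`, viewed as a point set. -/
def IsLineSet {F : Type} [Field F] (S : Set (Projectivization F (Fin 3 → F))) : Prop :=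
  ∃ l : Fin 3 → F, l ≠ 0 ∧ S = {p : Projectivization F (Fin 3 → F) | l ⬝ᵥ p.rep = 0}

/-- `L` is a tangent line of the conic `C`: a line meeting `C` in exactly one point. -/
def IsTangentTo {F : Type} [Field F] (C L : Set (Projectivization F (Fin 3 → F))) : Prop :=
  IsLineSet L ∧ ∃ p, L ∩ C = {p}

/-- `p` is an external point of `C`: `p ∉ C` and exactly two tangents of `C` pass through `p`. -/
def IsExternalPoint {F : Type} [Field F] (C : Set (Projectivization F (Fin 3 → F)))
    (p : Projectivization F (Fin 3 → F)) : Prop :=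
  p ∉ C ∧ {L : Set (Projectivization F (Fin 3 → F)) | IsTangentTo C L ∧ p ∈ L}.ncard = 2

/-- `p` is an internal point of `C`: `p ∉ C` and no tangent of `C` passes through `p`. -/
def IsInternalPoint {F : Type} [Field F] (C : Set (Projectivization F (Fin 3 → F)))
    (p : Projectivization F (Fin 3 → F)) : Prop :=
  p ∉ C ∧ ∀ L, IsTangentTo C L → p ∉ L

/-- Two conics are in nested position: all points of each are external to the other, or all
points of each are internal to the other (independently for each of the two conics). -/
def NestedPosition {F : Type} [Field F]
    (C C' : Set (Projectivization F (Fin 3 → F))) : Prop :=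
  ((∀ p ∈ C, IsExternalPoint C' p) ∨ (∀ p ∈ C, IsInternalPoint C' p)) ∧
  ((∀ p ∈ C', IsExternalPoint C p) ∨ (∀ p ∈ C', IsInternalPoint C p))

namespace NestedAux

open Module

variable {F : Type} [Field F]

def dotL (l : Fin 3 → F) : (Fin 3 → F) →ₗ[F] F where
  toFun v := l ⬝ᵥ v
  map_add' x y := dotProduct_add l x y
  map_smul' c x := by simp

@[simp] lemma dotL_apply (l v : Fin 3 → F) : dotL l v = l ⬝ᵥ v := rfl

lemma dotL_injective : Function.Injective (dotL (F := F)) := by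
  intro a b h
  funext i
  have := congrArg (fun f => f (Pi.single i 1)) h
  simpa only [dotL, LinearMap.coe_mk, AddHom.coe_mk, dotProduct_single, mul_one] using this

def Phi : (Fin 3 → F) →ₗ[F] Module.Dual F (Fin 3 → F) where
  toFun := dotL
  map_add' x y := by ext v; simp [add_dotProduct]
  map_smul' c x := by ext v; simp [smul_dotProduct]

lemma finrank_ker_dotL {l : Fin 3 → F} (hl : l ≠ 0) :
    finrank F (LinearMap.ker (dotL l)) = 2 := by
  have hsurj : Function.Surjective (dotL l) := by
    obtain ⟨i, hi⟩ : ∃ i, l i ≠ 0 := by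
      by_contra h; push_neg at h; exact hl (funext h)
    intro y
    refine ⟨(y / l i) • (Pi.single i 1 : Fin 3 → F), ?_⟩
    rw [dotL_apply, dotProduct_smul, dotProduct_single, mul_one, smul_eq_mul]
    field_simp
  have h1 : finrank F (LinearMap.range (dotL l)) = 1 := by
    rw [LinearMap.range_eq_top.mpr hsurj]
    simp
  have h2 := LinearMap.finrank_range_add_finrank_ker (dotL l)
  rw [h1] at h2
  have h3 : finrank F (Fin 3 → F) = 3 := by simp
  omega


lemma bsymm {M : Matrix (Fin 3) (Fin 3) F} (hM : M.IsSymm) (x y : Fin 3 → F) :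
    x ⬝ᵥ M.mulVec y = y ⬝ᵥ M.mulVec x := by
  rw [dotProduct_mulVec, ← mulVec_transpose, hM.eq, dotProduct_comm]

lemma no_isotropic_plane {M : Matrix (Fin 3) (Fin 3) F} (hM : M.IsSymm) (hdet : IsUnit M.det)
    (v w : Fin 3 → F) (hvw : LinearIndependent F ![v, w])
    (h11 : v ⬝ᵥ M.mulVec v = 0) (h12 : v ⬝ᵥ M.mulVec w = 0)
    (h22 : w ⬝ᵥ M.mulVec w = 0) : False := by
  classical
  set S : Submodule F (Fin 3 → F) := Submodule.span F (Set.range ![v, w]) with hS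
  have hminj : Function.Injective M.mulVec :=
    mulVec_injective_iff_isUnit.mpr ((Matrix.isUnit_iff_isUnit_det M).mpr hdet)
  have key : ∀ u : Fin 3 → F, (∀ i, (![v,w] i) ⬝ᵥ M.mulVec u = 0) →
      Phi (F := F) (M.mulVec u) ∈ S.dualAnnihilator := by
    intro u hu
    rw [Submodule.mem_dualAnnihilator]
    intro x hx
    induction hx using Submodule.span_induction with
    | mem x hxm =>
        obtain ⟨i, rfl⟩ := hxm
        show (M.mulVec u) ⬝ᵥ (![v,w] i) = 0
        rw [dotProduct_comm]; exact hu i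
    | zero => simp
    | add a b _ _ ha hb => simp [map_add, ha, hb]
    | smul c a _ ha => simp [ha]
  have hv' : Phi (F := F) (M.mulVec v) ∈ S.dualAnnihilator := by
    apply key; intro i; fin_cases i
    · exact h11
    · show w ⬝ᵥ M.mulVec v = 0
      rw [bsymm hM]; exact h12
  have hw' : Phi (F := F) (M.mulVec w) ∈ S.dualAnnihilator := by
    apply key; intro i; fin_cases i
    · show v ⬝ᵥ M.mulVec w = 0
      exact h12
    · show w ⬝ᵥ M.mulVec w = 0
      exact h22
  -- linear independence of the two functionals
  have hab : LinearIndependent F ![M.mulVec v, M.mulVec w] := by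
    have := hvw.map' M.mulVecLin (LinearMap.ker_eq_bot.mpr hminj)
    have he : (M.mulVecLin ∘ ![v, w]) = ![M.mulVec v, M.mulVec w] := by
      funext i; fin_cases i <;> rfl
    rwa [he] at this
  have hab2 : LinearIndependent F ![Phi (F := F) (M.mulVec v), Phi (F := F) (M.mulVec w)] := by
    have hker : LinearMap.ker (Phi (F := F)) = ⊥ := by
      rw [LinearMap.ker_eq_bot]; exact fun a b h => dotL_injective h
    have := hab.map' Phi hker
    have he : ((Phi (F := F)) ∘ ![M.mulVec v, M.mulVec w])
        = ![Phi (F := F) (M.mulVec v), Phi (F := F) (M.mulVec w)] := by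
      funext i; fin_cases i <;> rfl
    rwa [he] at this
  -- dual annihilator has dimension 1
  have hfr : finrank F S.dualAnnihilator = 1 := by
    have e : finrank F ((Fin 3 → F) ⧸ S) = finrank F S.dualAnnihilator :=
      LinearEquiv.finrank_eq (Subspace.quotEquivAnnihilator S)
    have h1 : finrank F S = 2 := by
      rw [hS, finrank_span_eq_card hvw]; simp
    have h2 := Submodule.finrank_quotient_add_finrank S
    have h3 : finrank F (Fin 3 → F) = 3 := by simp
    omega
  -- two independent vectors in a 1-dimensional space: contradiction
  have hle : Submodule.span F
      (Set.range ![Phi (F := F) (M.mulVec v), Phi (F := F) (M.mulVec w)]) ≤ S.dualAnnihilator := by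
    rw [Submodule.span_le]
    rintro x ⟨i, rfl⟩
    fin_cases i
    · exact hv'
    · exact hw'
  have h2le := Submodule.finrank_mono hle
  rw [finrank_span_eq_card hab2, hfr] at h2le
  simp at h2le


-- geometry part
lemma mk_mem_conic {M : Matrix (Fin 3) (Fin 3) F} {v : Fin 3 → F} (hv : v ≠ 0) :
    Projectivization.mk F v hv ∈ conicSet M ↔ v ⬝ᵥ M.mulVec v = 0 := by
  obtain ⟨a, ha⟩ := Projectivization.exists_smul_eq_mk_rep F v hv
  have hrep : (Projectivization.mk F v hv).rep = (a : F) • v := ha.symm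
  constructor
  · intro h
    have h' : ((a : F) • v) ⬝ᵥ M.mulVec ((a : F) • v) = 0 := by
      have h'' : (Projectivization.mk F v hv).rep ⬝ᵥ M.mulVec (Projectivization.mk F v hv).rep = 0 := h
      rwa [hrep] at h''
    rw [smul_dotProduct, mulVec_smul, dotProduct_smul, smul_eq_mul, smul_eq_mul] at h'
    have := mul_eq_zero.mp h'
    rcases this with h0 | h0
    · exact absurd h0 a.ne_zero
    rcases mul_eq_zero.mp h0 with h1 | h1
    · exact absurd h1 a.ne_zero
    · exact h1
  · intro h
    show _ ⬝ᵥ _ = 0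
    rw [hrep, smul_dotProduct, mulVec_smul, dotProduct_smul, smul_eq_mul, smul_eq_mul, h,
      mul_zero, mul_zero]

lemma rep_indep {p q : Projectivization F (Fin 3 → F)} (h : p ≠ q) :
    LinearIndependent F ![p.rep, q.rep] := by
  have := (Projectivization.independent_pair_iff_ne p q).mpr h
  rw [Projectivization.independent_iff] at this
  have he : (Projectivization.rep ∘ ![p, q]) = ![p.rep, q.rep] := by
    funext i; fin_cases i <;> rfl
  rwa [he] at this

lemma line_inter_conic_ncard_le {M : Matrix (Fin 3) (Fin 3) F} (hM : M.IsSymm)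
    (hdet : IsUnit M.det) (h2 : (2 : F) ≠ 0) {l : Fin 3 → F} (hl : l ≠ 0) :
    ({p : Projectivization F (Fin 3 → F) | l ⬝ᵥ p.rep = 0} ∩ conicSet M).ncard ≤ 2 := by
  set s := {p : Projectivization F (Fin 3 → F) | l ⬝ᵥ p.rep = 0} ∩ conicSet M with hs
  by_contra hcon
  push_neg at hcon
  have hsfin : s.Finite := by
    by_contra hinf
    have hinf' : s.Infinite := hinf
    rw [hinf'.ncard] at hcon; omega
  obtain ⟨p1, p2, p3, hp1, hp2, hp3, h12, h13, h23⟩ := (Set.two_lt_ncard_iff hsfin).mp hcon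
  obtain ⟨hl1, hc1⟩ := hp1
  obtain ⟨hl2, hc2⟩ := hp2
  obtain ⟨hl3, hc3⟩ := hp3
  set v1 := p1.rep with hv1
  set v2 := p2.rep with hv2
  set v3 := p3.rep with hv3
  have hind : LinearIndependent F ![v1, v2] := rep_indep h12
  -- v3 ∈ span {v1, v2}
  have hsle : Submodule.span F (Set.range ![v1, v2]) ≤ LinearMap.ker (dotL l) := by
    rw [Submodule.span_le]
    rintro x ⟨i, rfl⟩
    fin_cases i
    · exact hl1
    · exact hl2
  have hspan : Submodule.span F (Set.range ![v1, v2]) = LinearMap.ker (dotL l) := by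
    apply Submodule.eq_of_le_of_finrank_le hsle
    rw [finrank_ker_dotL hl, finrank_span_eq_card hind]
    simp
  have hv3mem : v3 ∈ Submodule.span F (Set.range ![v1, v2]) := by
    rw [hspan]; exact hl3
  have hrange : Set.range ![v1, v2] = {v1, v2} := by
    simp [Matrix.range_cons, Matrix.range_empty, Set.pair_comm]
  rw [hrange, Submodule.mem_span_pair] at hv3mem
  obtain ⟨c, d, hcd⟩ := hv3mem
  -- c ≠ 0, d ≠ 0
  have hc0 : c ≠ 0 := by
    rintro rfl
    rw [zero_smul, zero_add] at hcd
    have hd0 : d ≠ 0 := by rintro rfl; rw [zero_smul] at hcd; exact p3.rep_nonzero hcd.symm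
    apply h23
    symm
    rw [← p2.mk_rep, ← p3.mk_rep]
    exact (Projectivization.mk_eq_mk_iff' F _ _ p3.rep_nonzero p2.rep_nonzero).mpr ⟨d, hcd⟩
  have hd0 : d ≠ 0 := by
    rintro rfl
    rw [zero_smul, add_zero] at hcd
    apply h13
    symm
    rw [← p1.mk_rep, ← p3.mk_rep]
    exact (Projectivization.mk_eq_mk_iff' F _ _ p3.rep_nonzero p1.rep_nonzero).mpr ⟨c, hcd⟩
  -- expand quadratic form
  have hexp : v3 ⬝ᵥ M.mulVec v3
      = c * c * (v1 ⬝ᵥ M.mulVec v1) + 2 * (c * d * (v1 ⬝ᵥ M.mulVec v2))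
        + d * d * (v2 ⬝ᵥ M.mulVec v2) := by
    rw [← hcd]
    rw [mulVec_add, mulVec_smul, mulVec_smul, add_dotProduct, smul_dotProduct, smul_dotProduct,
      dotProduct_add, dotProduct_add, dotProduct_smul, dotProduct_smul, dotProduct_smul,
      dotProduct_smul, bsymm hM v2 v1]
    simp only [smul_eq_mul]
    ring
  have hq1 : v1 ⬝ᵥ M.mulVec v1 = 0 := hc1
  have hq2 : v2 ⬝ᵥ M.mulVec v2 = 0 := hc2
  have hq3 : v3 ⬝ᵥ M.mulVec v3 = 0 := hc3
  rw [hq3, hq1, hq2] at hexp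
  have hB : v1 ⬝ᵥ M.mulVec v2 = 0 := by
    have : 2 * (c * d * (v1 ⬝ᵥ M.mulVec v2)) = 0 := by linear_combination -hexp
    rcases mul_eq_zero.mp this with h | h
    · exact absurd h h2
    rcases mul_eq_zero.mp h with h' | h'
    · rcases mul_eq_zero.mp h' with h'' | h''
      · exact absurd h'' hc0
      · exact absurd h'' hd0
    · exact h'
  exact no_isotropic_plane hM hdet v1 v2 hind hq1 hB hq2

lemma tangent_ker_eq {M : Matrix (Fin 3) (Fin 3) F} (hM : M.IsSymm) (hdet : IsUnit M.det)
    (h2 : (2 : F) ≠ 0) {l : Fin 3 → F} (hl : l ≠ 0) {p : Projectivization F (Fin 3 → F)}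
    (hint : {q : Projectivization F (Fin 3 → F) | l ⬝ᵥ q.rep = 0} ∩ conicSet M = {p}) :
    LinearMap.ker (dotL l) = LinearMap.ker (dotL (M.mulVec p.rep)) := by
  have hminj : Function.Injective M.mulVec :=
    mulVec_injective_iff_isUnit.mpr ((Matrix.isUnit_iff_isUnit_det M).mpr hdet)
  set x := p.rep with hx
  have hpmem : p ∈ ({q : Projectivization F (Fin 3 → F) | l ⬝ᵥ q.rep = 0} ∩ conicSet M) := by
    rw [hint]; rfl
  have hlx : l ⬝ᵥ x = 0 := hpmem.1
  have hQx : x ⬝ᵥ M.mulVec x = 0 := hpmem.2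
  have hsub : LinearMap.ker (dotL l) ≤ LinearMap.ker (dotL (M.mulVec x)) := by
    intro v hv
    have hlv : l ⬝ᵥ v = 0 := hv
    show (M.mulVec x) ⬝ᵥ v = 0
    rw [dotProduct_comm, bsymm hM]
    -- goal : x ⬝ᵥ M.mulVec v = 0
    by_cases hcv : ∃ c : F, v = c • x
    · obtain ⟨c, rfl⟩ := hcv
      rw [mulVec_smul, dotProduct_smul, smul_eq_mul, hQx, mul_zero]
    · by_contra hB
      set β := x ⬝ᵥ M.mulVec v with hβ
      set s := -(v ⬝ᵥ M.mulVec v) / (2 * β) with hsdef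
      set w := s • x + v with hw
      have hw0 : w ≠ 0 := by
        intro h0
        apply hcv
        refine ⟨-s, ?_⟩
        have : v = -(s • x) := by
          rw [eq_neg_iff_add_eq_zero, add_comm]; exact h0
        rwa [← neg_smul] at this
      have hlw : l ⬝ᵥ w = 0 := by
        rw [hw, dotProduct_add, dotProduct_smul, smul_eq_mul, hlx, hlv, mul_zero, add_zero]
      have hQw : w ⬝ᵥ M.mulVec w = 0 := by
        have hvx : v ⬝ᵥ M.mulVec x = β := by rw [hβ, bsymm hM]
        rw [hw, mulVec_add, mulVec_smul, add_dotProduct, smul_dotProduct, dotProduct_add,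
          dotProduct_add, dotProduct_smul, dotProduct_smul, hQx, hvx]
        simp only [smul_eq_mul, ← hβ]
        rw [hsdef]
        field_simp
        ring
      have hmkmem : Projectivization.mk F w hw0 ∈
          ({q : Projectivization F (Fin 3 → F) | l ⬝ᵥ q.rep = 0} ∩ conicSet M) := by
        constructor
        · show l ⬝ᵥ (Projectivization.mk F w hw0).rep = 0
          obtain ⟨a, ha⟩ := Projectivization.exists_smul_eq_mk_rep F w hw0
          rw [← ha]
          have : (a : F) • w = (a • w : Fin 3 → F) := rfl
          rw [Units.smul_def, dotProduct_smul, smul_eq_mul, hlw, mul_zero]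
        · exact (mk_mem_conic hw0).mpr hQw
      rw [hint] at hmkmem
      have : Projectivization.mk F w hw0 = Projectivization.mk F x p.rep_nonzero := by
        rw [hmkmem]; exact (p.mk_rep).symm
      obtain ⟨a, ha⟩ := (Projectivization.mk_eq_mk_iff' F _ _ hw0 p.rep_nonzero).mp this
      -- a • x = w = s • x + v
      apply hcv
      refine ⟨a - s, ?_⟩
      have ha' : a • x = s • x + v := ha
      have : v = a • x - s • x := by
        rw [eq_sub_iff_add_eq, add_comm]; exact ha'.symm
      rw [this, sub_smul]
  have hMx : M.mulVec x ≠ 0 := by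
    intro h0
    exact p.rep_nonzero (hminj (h0.trans (M.mulVec_zero).symm))
  exact Submodule.eq_of_le_of_finrank_le hsub
    (by rw [finrank_ker_dotL hl, finrank_ker_dotL hMx])

lemma tangent_unique {M : Matrix (Fin 3) (Fin 3) F} (hM : M.IsSymm) (hdet : IsUnit M.det)
    (h2 : (2 : F) ≠ 0) {T1 T2 : Set (Projectivization F (Fin 3 → F))}
    {p : Projectivization F (Fin 3 → F)}
    (hT1 : IsLineSet T1) (hi1 : T1 ∩ conicSet M = {p})
    (hT2 : IsLineSet T2) (hi2 : T2 ∩ conicSet M = {p}) : T1 = T2 := by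
  obtain ⟨l1, hl1, rfl⟩ := hT1
  obtain ⟨l2, hl2, rfl⟩ := hT2
  have k1 := tangent_ker_eq hM hdet h2 hl1 hi1
  have k2 := tangent_ker_eq hM hdet h2 hl2 hi2
  have hk : LinearMap.ker (dotL l1) = LinearMap.ker (dotL l2) := k1.trans k2.symm
  ext q
  constructor
  · intro hq
    have : q.rep ∈ LinearMap.ker (dotL l1) := hq
    rw [hk] at this
    exact this
  · intro hq
    have : q.rep ∈ LinearMap.ker (dotL l2) := hq
    rw [← hk] at this
    exact this

lemma ncard_lt_of_ext [Fintype F] (h2 : (2 : F) ≠ 0)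
    {M M' : Matrix (Fin 3) (Fin 3) F} (hM : M.IsSymm) (hdet : IsUnit M.det)
    (hM' : M'.IsSymm) (hdet' : IsUnit M'.det)
    {L : Set (Projectivization F (Fin 3 → F))}
    (hL : IsTangentTo (conicSet M) L) (hL' : IsTangentTo (conicSet M') L)
    (hext : ∀ y ∈ conicSet M', IsExternalPoint (conicSet M) y) :
    (conicSet M').ncard < (conicSet M).ncard := by
  classical
  haveI : Finite (Projectivization F (Fin 3 → F)) := Quotient.finite _
  haveI : Fintype (Projectivization F (Fin 3 → F)) := Fintype.ofFinite _
  haveI : Fintype (Set (Projectivization F (Fin 3 → F))) := Fintype.ofFinite _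
  haveI : Nonempty (Projectivization F (Fin 3 → F)) :=
    ⟨Projectivization.mk F (Pi.single 0 1) (by
      intro h
      have := congrFun h 0
      simp at this)⟩
  set I : Finset ((Projectivization F (Fin 3 → F)) × Set (Projectivization F (Fin 3 → F))) :=
    Finset.univ.filter
      (fun z => z.1 ∈ conicSet M' ∧ IsTangentTo (conicSet M) z.2 ∧ z.1 ∈ z.2) with hI
  set TC : Finset (Set (Projectivization F (Fin 3 → F))) :=
    Finset.univ.filter (fun T => IsTangentTo (conicSet M) T) with hTC
  have memI : ∀ z, z ∈ I ↔ z.1 ∈ conicSet M' ∧ IsTangentTo (conicSet M) z.2 ∧ z.1 ∈ z.2 := by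
    intro z; rw [hI, Finset.mem_filter]; simp
  -- first count : fibers over points of C'
  have hcount1 : I.card = 2 * (conicSet M').toFinset.card := by
    have h1 : I.card = ∑ y ∈ (conicSet M').toFinset, (I.filter fun z => z.1 = y).card := by
      apply Finset.card_eq_sum_card_fiberwise (f := Prod.fst) (t := (conicSet M').toFinset)
      intro z hz
      rw [Finset.mem_coe, Set.mem_toFinset]
      exact ((memI z).mp hz).1
    have h2' : ∀ y ∈ (conicSet M').toFinset, (I.filter fun z => z.1 = y).card = 2 := by
      intro y hy
      rw [Set.mem_toFinset] at hy
      have hmap : ({L : Set (Projectivization F (Fin 3 → F)) |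
          IsTangentTo (conicSet M) L ∧ y ∈ L}).toFinset.map
          ⟨fun T => (y, T), fun a b h => (Prod.ext_iff.mp h).2⟩
          = I.filter fun z => z.1 = y := by
        ext z
        rw [Finset.mem_map, Finset.mem_filter]
        constructor
        · rintro ⟨T, hT, rfl⟩
          rw [Set.mem_toFinset] at hT
          exact ⟨(memI _).mpr ⟨hy, hT.1, hT.2⟩, rfl⟩
        · rintro ⟨hz, hz1⟩
          obtain ⟨h1', h2'', h3⟩ := (memI z).mp hz
          refine ⟨z.2, ?_, ?_⟩
          · rw [Set.mem_toFinset]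
            exact ⟨h2'', hz1 ▸ h3⟩
          · show (y, z.2) = z
            rw [← hz1]
      rw [← hmap, Finset.card_map, ← Set.ncard_eq_toFinset_card']
      exact (hext y hy).2
    rw [h1, Finset.sum_congr rfl h2', Finset.sum_const, smul_eq_mul, mul_comm]
  -- second count : fibers over tangent lines
  have hcount2 : I.card = ∑ T ∈ TC, (I.filter fun z => z.2 = T).card := by
    apply Finset.card_eq_sum_card_fiberwise (f := Prod.snd) (t := TC)
    intro z hz
    rw [hTC, Finset.mem_coe, Finset.mem_filter]
    exact ⟨Finset.mem_univ _, ((memI z).mp hz).2.1⟩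
  -- fiber over T is T ∩ C'
  have hfib : ∀ T, IsTangentTo (conicSet M) T →
      (I.filter fun z => z.2 = T).card = (T ∩ conicSet M').toFinset.card := by
    intro T hT
    have hmap : (T ∩ conicSet M').toFinset.map
        ⟨fun y => (y, T), fun a b h => congrArg Prod.fst h⟩
        = I.filter fun z => z.2 = T := by
      ext z
      rw [Finset.mem_map, Finset.mem_filter]
      constructor
      · rintro ⟨y, hy, rfl⟩
        rw [Set.mem_toFinset] at hy
        exact ⟨(memI _).mpr ⟨hy.2, hT, hy.1⟩, rfl⟩
      · rintro ⟨hz, hz2⟩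
        obtain ⟨h1', h2'', h3⟩ := (memI z).mp hz
        refine ⟨z.1, ?_, ?_⟩
        · rw [Set.mem_toFinset]
          exact ⟨hz2 ▸ h3, h1'⟩
        · show (z.1, T) = z
          rw [← hz2]
    rw [← hmap, Finset.card_map]
  -- each tangent of C meets C' in at most 2 points
  have hbound : ∀ T, IsTangentTo (conicSet M) T → (T ∩ conicSet M').toFinset.card ≤ 2 := by
    intro T hT
    obtain ⟨l, hl, rfl⟩ := hT.1
    rw [← Set.ncard_eq_toFinset_card']
    exact line_inter_conic_ncard_le hM' hdet' h2 hl
  have memTC : ∀ T, T ∈ TC ↔ IsTangentTo (conicSet M) T := by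
    intro T; rw [hTC, Finset.mem_filter]; simp
  have hLTC : L ∈ TC := (memTC L).mpr hL
  obtain ⟨p', hp'⟩ := hL'.2
  have hLfib : (L ∩ conicSet M').toFinset.card = 1 := by
    rw [← Set.ncard_eq_toFinset_card', hp', Set.ncard_singleton]
  -- the injection from tangents to touch points
  have hinj : TC.card ≤ (conicSet M).toFinset.card := by
    apply Finset.card_le_card_of_injOn
      (fun T => if h : ∃ p, T ∩ conicSet M = {p} then h.choose else
        Classical.arbitrary (Projectivization F (Fin 3 → F)))
    · intro T hT
      have h := ((memTC T).mp hT).2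
      dsimp only
      rw [dif_pos h]
      have hspec := h.choose_spec
      rw [Finset.mem_coe, Set.mem_toFinset]
      have hmem : h.choose ∈ ({h.choose} : Set (Projectivization F (Fin 3 → F))) := rfl
      rw [← hspec] at hmem
      exact hmem.2
    · intro T1 hT1 T2 hT2 heq
      rw [Finset.mem_coe] at hT1 hT2
      have ht1 := (memTC T1).mp hT1
      have ht2 := (memTC T2).mp hT2
      have h1 := ht1.2
      have h2'' := ht2.2
      simp only [dif_pos h1, dif_pos h2''] at heq
      exact tangent_unique hM hdet h2 ht1.1 h1.choose_spec ht2.1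
        (heq ▸ h2''.choose_spec)
  -- sum bound
  have hsum : ∑ T ∈ TC, (I.filter fun z => z.2 = T).card ≤ 1 + 2 * (TC.card - 1) := by
    rw [← Finset.add_sum_erase _ _ hLTC]
    have hL1 : (I.filter fun z => z.2 = L).card = 1 := by
      rw [hfib L hL]; exact hLfib
    rw [hL1]
    have hrest : ∑ T ∈ TC.erase L, (I.filter fun z => z.2 = T).card ≤ (TC.erase L).card * 2 := by
      apply Finset.sum_le_card_nsmul
      intro T hT
      have hT' : IsTangentTo (conicSet M) T := (memTC T).mp (Finset.mem_of_mem_erase hT)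
      rw [hfib T hT']
      exact hbound T hT'
    rw [Finset.card_erase_of_mem hLTC] at hrest
    omega
  have hTCpos : 1 ≤ TC.card := Finset.card_pos.mpr ⟨L, hLTC⟩
  rw [Set.ncard_eq_toFinset_card', Set.ncard_eq_toFinset_card']
  omega

end NestedAux

open NestedAux

/-- Two proper conics of `PG(2,q)` in nested position are disjoint and have no common
tangent line. -/
theorem nested_conics_disjoint_no_common_tangent
    (F : Type) [Field F] [Fintype F] (hq : Odd (Fintype.card F))
    (C C' : Set (Projectivization F (Fin 3 → F)))
    (hC : IsProperConic C) (hC' : IsProperConic C')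
    (hnest : NestedPosition C C') :
    Disjoint C C' ∧ ¬∃ L, IsTangentTo C L ∧ IsTangentTo C' L := by
  obtain ⟨M, hM, hdet, hCeq⟩ := hC
  obtain ⟨M', hM', hdet', hCeq'⟩ := hC'
  subst hCeq hCeq'
  have hchar : ringChar F ≠ 2 := by
    intro h
    have heven := FiniteField.even_card_iff_char_two.mp h
    have hodd := Nat.odd_iff.mp hq
    omega
  have h2 : (2 : F) ≠ 0 := by
    intro h20
    have h20' : ((2 : ℕ) : F) = 0 := by exact_mod_cast h20
    have hdvd : ringChar F ∣ 2 := (CharP.cast_eq_zero_iff F (ringChar F) 2).mp h20'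
    rcases (Nat.dvd_prime Nat.prime_two).mp hdvd with h1 | h1
    · exact CharP.ringChar_ne_one h1
    · exact hchar h1
  constructor
  · rw [Set.disjoint_left]
    intro p hp hp'
    rcases hnest.1 with h | h
    · exact (h p hp).1 hp'
    · exact (h p hp).1 hp'
  · rintro ⟨L, hLC, hLC'⟩
    obtain ⟨p, hp⟩ := hLC.2
    obtain ⟨p', hp''⟩ := hLC'.2
    have hpmem : p ∈ L ∩ conicSet M := by rw [hp]; rfl
    have hp'mem : p' ∈ L ∩ conicSet M' := by rw [hp'']; rfl
    have hextC' : ∀ x ∈ conicSet M, IsExternalPoint (conicSet M') x := by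
      rcases hnest.1 with h | h
      · exact h
      · exact absurd hpmem.1 ((h p hpmem.2).2 L hLC')
    have hextC : ∀ y ∈ conicSet M', IsExternalPoint (conicSet M) y := by
      rcases hnest.2 with h | h
      · exact h
      · exact absurd hp'mem.1 ((h p' hp'mem.2).2 L hLC)
    have l1 := ncard_lt_of_ext h2 hM hdet hM' hdet' hLC hLC' hextC
    have l2 := ncard_lt_of_ext h2 hM' hdet' hM hdet hLC' hLC hextC'
    omega
end
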